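/- arXiv:1203.3210 — 6 statements merged into one kernel-verified Lean document; each statement's English description precedes it below -/
import Mathlib

section
/- Let K be a positive integer and let A_1, A_2, ..., A_K and B_1, B_2, ..., B_K be n×n real positive semidefinite matrices such that A_1 and B_1 are positive definite. Then Tr[ ∑_{k=1}^{K} (A_k − B_k) ( (∑_{l=1}^{k} B_l)^{−1} − (∑_{l=1}^{k} A_l)^{−1} ) ] ≥ 0. -/
open Finset Matrix

section Aux

variable {n : ℕ}

private lemma trace_nonneg_of_psd {P : Matrix (Fin n) (Fin n) ℝ} (hP : P.PosSemidef) :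
    0 ≤ P.trace := by
  rw [Matrix.trace]
  refine Finset.sum_nonneg fun i _ => ?_
  simpa [dotProduct, Pi.single_apply, Finset.sum_ite_eq, Matrix.mulVec,
    Matrix.diag] using hP.diag_nonneg (i := i)

open scoped MatrixOrder in
private lemma trace_mul_psd_nonneg {P Q : Matrix (Fin n) (Fin n) ℝ}
    (hP : P.PosSemidef) (hQ : Q.PosSemidef) : 0 ≤ (P * Q).trace := by
  have hC : CFC.sqrt Q * CFC.sqrt Q = Q := CFC.sqrt_mul_sqrt_self Q hQ.nonneg
  have h1 : (CFC.sqrt Q * P * CFC.sqrt Q).PosSemidef := by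
    have := hP.mul_mul_conjTranspose_same (CFC.sqrt Q)
    rwa [(CFC.sqrt_nonneg Q).posSemidef.isHermitian.eq] at this
  calc (0:ℝ) ≤ (CFC.sqrt Q * P * CFC.sqrt Q).trace := trace_nonneg_of_psd h1
    _ = (P * Q).trace := by
        rw [Matrix.mul_assoc, Matrix.trace_mul_comm, Matrix.mul_assoc, hC]

private lemma quad_tr_nonneg {X M N : Matrix (Fin n) (Fin n) ℝ} (hX : X.IsHermitian)
    (hM : M.PosSemidef) (hN : N.PosSemidef) : 0 ≤ (X * M * X * N).trace := by
  have h1 : (X * M * X).PosSemidef := by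
    have := hM.mul_mul_conjTranspose_same X
    rwa [hX.eq] at this
  exact trace_mul_psd_nonneg h1 hN

private lemma herm_transpose {X : Matrix (Fin n) (Fin n) ℝ} (hX : X.IsHermitian) : Xᵀ = X := by
  rw [← Matrix.conjTranspose_eq_transpose_of_trivial]; exact hX.eq

private lemma form_symm {X Y M N : Matrix (Fin n) (Fin n) ℝ} (hX : X.IsHermitian)
    (hY : Y.IsHermitian) (hM : M.IsHermitian) (hN : N.IsHermitian) :
    (X * M * Y * N).trace = (Y * M * X * N).trace := by
  have h1 : (X * M * Y * N)ᵀ = N * (Y * M * X) := by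
    simp [Matrix.transpose_mul, herm_transpose hX, herm_transpose hY,
      herm_transpose hM, herm_transpose hN, Matrix.mul_assoc]
  calc (X * M * Y * N).trace = ((X * M * Y * N)ᵀ).trace := (Matrix.trace_transpose _).symm
    _ = (N * (Y * M * X)).trace := by rw [h1]
    _ = (Y * M * X * N).trace := by rw [Matrix.trace_mul_comm]

private lemma amgm_tr {X Y M N : Matrix (Fin n) (Fin n) ℝ} (hX : X.IsHermitian)
    (hY : Y.IsHermitian) (hM : M.PosSemidef) (hN : N.PosSemidef) :
    2 * (X * M * Y * N).trace ≤ (X * M * X * N).trace + (Y * M * Y * N).trace := by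
  have h0 : 0 ≤ ((X - Y) * M * (X - Y) * N).trace :=
    quad_tr_nonneg (hX.sub hY) hM hN
  have hexp : ((X - Y) * M * (X - Y) * N).trace
      = (X * M * X * N).trace - (X * M * Y * N).trace
        - (Y * M * X * N).trace + (Y * M * Y * N).trace := by
    simp only [Matrix.sub_mul, Matrix.mul_sub, Matrix.trace_sub, Matrix.trace_add]
    ring
  have hsym := form_symm hX hY hM.isHermitian hN.isHermitian
  linarith

private lemma inv_diff {S T : Matrix (Fin n) (Fin n) ℝ} (hS : IsUnit S.det)
    (hT : IsUnit T.det) : T⁻¹ - S⁻¹ = T⁻¹ * (S - T) * S⁻¹ := by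
  rw [Matrix.mul_sub, Matrix.sub_mul, Matrix.mul_assoc, Matrix.mul_nonsing_inv S hS,
    Matrix.nonsing_inv_mul T hT]
  simp

private lemma inv_sub_inv_psd {M N : Matrix (Fin n) (Fin n) ℝ} (hM : M.PosDef)
    (hN : N.PosDef) (h : (N - M).PosSemidef) : (M⁻¹ - N⁻¹).PosSemidef := by
  have hMd : IsUnit M.det := isUnit_iff_ne_zero.mpr hM.det_pos.ne'
  have hNd : IsUnit N.det := isUnit_iff_ne_zero.mpr hN.det_pos.ne'
  have e1 : M⁻¹ * M = 1 := Matrix.nonsing_inv_mul M hMd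
  have e2 : M * M⁻¹ = 1 := Matrix.mul_nonsing_inv M hMd
  have e3 : N⁻¹ * N = 1 := Matrix.nonsing_inv_mul N hNd
  have key : M⁻¹ - N⁻¹ = (M⁻¹ - N⁻¹) * M * (M⁻¹ - N⁻¹) + N⁻¹ * (N - M) * N⁻¹ := by
    rw [Matrix.sub_mul, Matrix.mul_sub, Matrix.mul_sub, Matrix.sub_mul, e1]
    rw [Matrix.mul_assoc N⁻¹ M M⁻¹, e2, Matrix.sub_mul, Matrix.sub_mul, e3]
    simp only [Matrix.one_mul, Matrix.mul_one]
    abel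
  have hE : (M⁻¹ - N⁻¹).IsHermitian := (hM.inv).isHermitian.sub (hN.inv).isHermitian
  rw [key]
  have t1 : ((M⁻¹ - N⁻¹) * M * (M⁻¹ - N⁻¹)).PosSemidef := by
    have := hM.posSemidef.mul_mul_conjTranspose_same (M⁻¹ - N⁻¹)
    rwa [hE.eq] at this
  have t2 : (N⁻¹ * (N - M) * N⁻¹).PosSemidef := by
    have := h.mul_mul_conjTranspose_same N⁻¹
    rwa [(hN.inv).isHermitian.eq] at this
  exact t1.add t2

private lemma sum_psd (C : ℕ → Matrix (Fin n) (Fin n) ℝ) (m : ℕ)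
    (hC : ∀ k ∈ Finset.Icc 1 m, (C k).PosSemidef) :
    (∑ l ∈ Finset.Icc 1 m, C l).PosSemidef :=
  Finset.sum_induction C _ (fun _ _ ha hb => ha.add hb) Matrix.PosSemidef.zero hC

private lemma sum_pd (C : ℕ → Matrix (Fin n) (Fin n) ℝ) (m : ℕ) (hm : 1 ≤ m)
    (hC : ∀ k ∈ Finset.Icc 1 m, (C k).PosSemidef) (h1 : (C 1).PosDef) :
    (∑ l ∈ Finset.Icc 1 m, C l).PosDef := by
  have h1m : (1 : ℕ) ∈ Finset.Icc 1 m := by simp [hm]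
  rw [← Finset.add_sum_erase _ C h1m]
  exact h1.add_posSemidef <| Finset.sum_induction C _ (fun _ _ ha hb => ha.add hb)
    Matrix.PosSemidef.zero (fun k hk => hC k (Finset.mem_of_mem_erase hk))

private lemma main_ind (A B : ℕ → Matrix (Fin n) (Fin n) ℝ)
    (hA1 : (A 1).PosDef) (hB1 : (B 1).PosDef) :
    ∀ m : ℕ, (∀ k ∈ Finset.Icc 1 m, (A k).PosSemidef) →
      (∀ k ∈ Finset.Icc 1 m, (B k).PosSemidef) →
      ((∑ l ∈ Finset.Icc 1 m, A l - ∑ l ∈ Finset.Icc 1 m, B l) *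
          (∑ l ∈ Finset.Icc 1 m, B l)⁻¹ *
          (∑ l ∈ Finset.Icc 1 m, A l - ∑ l ∈ Finset.Icc 1 m, B l) *
          (∑ l ∈ Finset.Icc 1 m, A l)⁻¹).trace / 2
        ≤ (∑ k ∈ Finset.Icc 1 m,
            (A k - B k) *
              ((∑ l ∈ Finset.Icc 1 k, B l)⁻¹ - (∑ l ∈ Finset.Icc 1 k, A l)⁻¹)).trace := by
  intro m
  induction m with
  | zero => simp
  | succ m ih =>
    intro hA hB
    have hsub : Finset.Icc 1 m ⊆ Finset.Icc 1 (m + 1) :=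
      Finset.Icc_subset_Icc_right (Nat.le_succ m)
    have hA' : ∀ k ∈ Finset.Icc 1 m, (A k).PosSemidef := fun k hk => hA k (hsub hk)
    have hB' : ∀ k ∈ Finset.Icc 1 m, (B k).PosSemidef := fun k hk => hB k (hsub hk)
    have IH := ih hA' hB'
    -- notation
    set Sm := ∑ l ∈ Finset.Icc 1 m, A l with hSm
    set Tm := ∑ l ∈ Finset.Icc 1 m, B l with hTm
    set Sp := ∑ l ∈ Finset.Icc 1 (m + 1), A l with hSpdef
    set Tp := ∑ l ∈ Finset.Icc 1 (m + 1), B l with hTpdef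
    have hins : Finset.Icc 1 (m + 1) = insert (m + 1) (Finset.Icc 1 m) :=
      (Finset.insert_Icc_right_eq_Icc_add_one (Nat.succ_le_succ (Nat.zero_le m))).symm
    have hnotmem : (m + 1) ∉ Finset.Icc 1 m := by simp
    have hSp : Sp = A (m + 1) + Sm := by rw [hSpdef, hins, Finset.sum_insert hnotmem]
    have hTp : Tp = B (m + 1) + Tm := by rw [hTpdef, hins, Finset.sum_insert hnotmem]
    have hmem : (m + 1) ∈ Finset.Icc 1 (m + 1) := by simp
    have hApsd := hA _ hmem
    have hBpsd := hB _ hmem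
    -- positivity facts
    have hSmpsd : Sm.PosSemidef := sum_psd A m hA'
    have hTmpsd : Tm.PosSemidef := sum_psd B m hB'
    have hSpPD : Sp.PosDef := sum_pd A (m + 1) (Nat.succ_le_succ (Nat.zero_le m)) hA hA1
    have hTpPD : Tp.PosDef := sum_pd B (m + 1) (Nat.succ_le_succ (Nat.zero_le m)) hB hB1
    set D := Sm - Tm with hD
    set Dp := Sp - Tp with hDp
    have hDh : D.IsHermitian := hSmpsd.isHermitian.sub hTmpsd.isHermitian
    have hDph : Dp.IsHermitian := hSpPD.posSemidef.isHermitian.sub hTpPD.posSemidef.isHermitian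
    have hABD : A (m + 1) - B (m + 1) = Dp - D := by
      rw [hDp, hD, hSp, hTp]; abel
    -- split the sum
    have hsplit : (∑ k ∈ Finset.Icc 1 (m + 1),
        (A k - B k) * ((∑ l ∈ Finset.Icc 1 k, B l)⁻¹ - (∑ l ∈ Finset.Icc 1 k, A l)⁻¹)).trace
        = ((A (m + 1) - B (m + 1)) * (Tp⁻¹ - Sp⁻¹)).trace
          + (∑ k ∈ Finset.Icc 1 m,
            (A k - B k) * ((∑ l ∈ Finset.Icc 1 k, B l)⁻¹ - (∑ l ∈ Finset.Icc 1 k, A l)⁻¹)).trace := by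
      rw [hins, Finset.sum_insert hnotmem, Matrix.trace_add]
    -- the new term
    have hinvdiff : Tp⁻¹ - Sp⁻¹ = Tp⁻¹ * Dp * Sp⁻¹ := by
      rw [inv_diff (isUnit_iff_ne_zero.mpr hSpPD.det_pos.ne')
        (isUnit_iff_ne_zero.mpr hTpPD.det_pos.ne'), hDp]
    have hterm : ((A (m + 1) - B (m + 1)) * (Tp⁻¹ - Sp⁻¹)).trace
        = (Dp * Tp⁻¹ * Dp * Sp⁻¹).trace - (D * Tp⁻¹ * Dp * Sp⁻¹).trace := by
      rw [hABD, hinvdiff]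
      have : (Dp - D) * (Tp⁻¹ * Dp * Sp⁻¹)
          = Dp * Tp⁻¹ * Dp * Sp⁻¹ - D * Tp⁻¹ * Dp * Sp⁻¹ := by
        simp only [Matrix.sub_mul, Matrix.mul_assoc]
      rw [this, Matrix.trace_sub]
    -- AM-GM bound
    have hTpinv : (Tp⁻¹).PosSemidef := hTpPD.inv.posSemidef
    have hSpinv : (Sp⁻¹).PosSemidef := hSpPD.inv.posSemidef
    have hamgm : 2 * (D * Tp⁻¹ * Dp * Sp⁻¹).trace
        ≤ (D * Tp⁻¹ * D * Sp⁻¹).trace + (Dp * Tp⁻¹ * Dp * Sp⁻¹).trace :=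
      amgm_tr hDh hDph hTpinv hSpinv
    -- monotonicity: q ≤ g
    have hq : (D * Tp⁻¹ * D * Sp⁻¹).trace ≤ (D * Tm⁻¹ * D * Sm⁻¹).trace := by
      rcases Nat.eq_zero_or_pos m with hm0 | hm1
      · subst hm0
        simp [hD, hSm, hTm]
      · have hSmPD : Sm.PosDef := sum_pd A m hm1 hA' hA1
        have hTmPD : Tm.PosDef := sum_pd B m hm1 hB' hB1
        have hTpm : (Tp - Tm).PosSemidef := by rw [hTp]; simpa using hBpsd
        have hSpm : (Sp - Sm).PosSemidef := by rw [hSp]; simpa using hApsd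
        have hTmono : (Tm⁻¹ - Tp⁻¹).PosSemidef := inv_sub_inv_psd hTmPD hTpPD hTpm
        have hSmono : (Sm⁻¹ - Sp⁻¹).PosSemidef := inv_sub_inv_psd hSmPD hSpPD hSpm
        have h1 : 0 ≤ (D * (Tm⁻¹ - Tp⁻¹) * D * Sm⁻¹).trace :=
          quad_tr_nonneg hDh hTmono hSmPD.inv.posSemidef
        have h2 : 0 ≤ (D * Tp⁻¹ * D * (Sm⁻¹ - Sp⁻¹)).trace :=
          quad_tr_nonneg hDh hTpinv hSmono
        have hiden : (D * (Tm⁻¹ - Tp⁻¹) * D * Sm⁻¹).trace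
            + (D * Tp⁻¹ * D * (Sm⁻¹ - Sp⁻¹)).trace
            = (D * Tm⁻¹ * D * Sm⁻¹).trace - (D * Tp⁻¹ * D * Sp⁻¹).trace := by
          simp only [Matrix.mul_sub, Matrix.sub_mul, Matrix.trace_sub]
          ring
        linarith
    rw [hsplit, hterm]
    linarith
end Aux

/-- Trace inequality of Belmega et al.: for positive semidefinite `A₁,…,A_K`,
`B₁,…,B_K` with `A₁, B₁` positive definite,
`Tr[∑ₖ (Aₖ − Bₖ)((∑_{l≤k} B_l)⁻¹ − (∑_{l≤k} A_l)⁻¹)] ≥ 0`. -/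
theorem trace_ineq_nonneg (n K : ℕ) (hK : 0 < K)
    (A B : ℕ → Matrix (Fin n) (Fin n) ℝ)
    (hA : ∀ k ∈ Finset.Icc 1 K, (A k).PosSemidef)
    (hB : ∀ k ∈ Finset.Icc 1 K, (B k).PosSemidef)
    (hA1 : (A 1).PosDef) (hB1 : (B 1).PosDef) :
    0 ≤ Matrix.trace (∑ k ∈ Finset.Icc 1 K,
      (A k - B k) *
        ((∑ l ∈ Finset.Icc 1 k, B l)⁻¹ - (∑ l ∈ Finset.Icc 1 k, A l)⁻¹)) := by
  have hmain := main_ind A B hA1 hB1 K hA hB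
  have hSpsd := sum_psd A K hA
  have hTpsd := sum_psd B K hB
  have hg : 0 ≤ ((∑ l ∈ Finset.Icc 1 K, A l - ∑ l ∈ Finset.Icc 1 K, B l) *
      (∑ l ∈ Finset.Icc 1 K, B l)⁻¹ *
      (∑ l ∈ Finset.Icc 1 K, A l - ∑ l ∈ Finset.Icc 1 K, B l) *
      (∑ l ∈ Finset.Icc 1 K, A l)⁻¹).trace :=
    quad_tr_nonneg (hSpsd.isHermitian.sub hTpsd.isHermitian) hTpsd.inv hSpsd.inv
  linarith
end

section
/- Let K be a positive integer and let A_1, ..., A_K and B_1, ..., B_K be n×n real positive semidefinite matrices such that A_1 and B_1 are positive definite. If the tuples (A_1, ..., A_K) and (B_1, ..., B_K) are not identical (i.e., A_k ≠ B_k for some k), then Tr[ ∑_{k=1}^{K} (A_k − B_k) ( (∑_{l=1}^{k} B_l)^{−1} − (∑_{l=1}^{k} A_l)^{−1} ) ] > 0. -/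
open Finset Matrix


variable {m : Type*} [Fintype m] [DecidableEq m]

lemma psd_trace_nonneg {M : Matrix m m ℝ} (hM : M.PosSemidef) : 0 ≤ M.trace := by
  rw [Matrix.trace]
  refine Finset.sum_nonneg fun i _ => ?_
  have := hM.dotProduct_mulVec_nonneg (Pi.single i 1)
  simpa [dotProduct, Matrix.mulVec, Pi.single_apply, Finset.sum_ite_eq,
    Matrix.diag] using this

open scoped MatrixOrder in
lemma trace_mul_psd_nonneg_s1 {R P : Matrix m m ℝ} (hR : R.PosSemidef) (hP : P.PosSemidef) :
    0 ≤ (R * P).trace := by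
  have h0 : Matrix.PosSemidef ((CFC.sqrt P)ᴴ * R * CFC.sqrt P) := hR.conjTranspose_mul_mul_same _
  have h1 := psd_trace_nonneg h0
  rw [(CFC.sqrt_nonneg P).posSemidef.isHermitian.eq] at h1
  rwa [Matrix.trace_mul_cycle, CFC.sqrt_mul_sqrt_self P hP.nonneg, Matrix.trace_mul_comm] at h1

lemma quad_nonneg {X Q P : Matrix m m ℝ} (hQ : Q.PosSemidef) (hP : P.PosSemidef) :
    0 ≤ (X * Q * Xᴴ * P).trace :=
  trace_mul_psd_nonneg_s1 (hQ.mul_mul_conjTranspose_same X) hP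

lemma quad_mono_left {X Q Q' P : Matrix m m ℝ} (hP : P.PosSemidef)
    (hQ : (Q' - Q).PosSemidef) (hX : Xᴴ = X) :
    (X * Q * X * P).trace ≤ (X * Q' * X * P).trace := by
  have h := quad_nonneg (X := X) hQ hP
  rw [hX] at h
  have he : X * (Q' - Q) * X * P = X * Q' * X * P - X * Q * X * P := by
    simp only [Matrix.mul_sub, Matrix.sub_mul]
  rw [he, Matrix.trace_sub] at h
  linarith

lemma quad_mono_right {X Q P P' : Matrix m m ℝ} (hQ : Q.PosSemidef)
    (hP : (P' - P).PosSemidef) (hX : Xᴴ = X) :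
    (X * Q * X * P).trace ≤ (X * Q * X * P').trace := by
  have hpsd : (X * Q * Xᴴ).PosSemidef := hQ.mul_mul_conjTranspose_same X
  rw [hX] at hpsd
  have h := trace_mul_psd_nonneg_s1 hpsd hP
  rw [Matrix.mul_sub, Matrix.trace_sub] at h
  linarith

omit [DecidableEq m] in
lemma trace_quad_comm {X Y Q P : Matrix m m ℝ} (hX : Xᴴ = X) (hY : Yᴴ = Y)
    (hQ : Qᴴ = Q) (hP : Pᴴ = P) :
    (X * Q * Y * P).trace = (Y * Q * X * P).trace := by
  have h1 : (X * Q * Y * P)ᴴ = P * (Y * (Q * X)) := by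
    simp only [Matrix.conjTranspose_mul, hX, hY, hQ, hP, Matrix.mul_assoc]
  have h2 : ((X * Q * Y * P)ᴴ).trace = (X * Q * Y * P).trace := by
    rw [Matrix.trace_conjTranspose]; simp
  rw [← h2, h1, Matrix.trace_mul_comm]
  simp only [Matrix.mul_assoc]

lemma cross_le {X Y Q P : Matrix m m ℝ} (hQpsd : Q.PosSemidef) (hPpsd : P.PosSemidef)
    (hX : Xᴴ = X) (hY : Yᴴ = Y) :
    2 * (X * Q * Y * P).trace ≤ (X * Q * X * P).trace + (Y * Q * Y * P).trace := by
  have h0 : 0 ≤ ((X - Y) * Q * (X - Y)ᴴ * P).trace := quad_nonneg hQpsd hPpsd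
  have hXY : (X - Y)ᴴ = X - Y := by rw [Matrix.conjTranspose_sub, hX, hY]
  rw [hXY] at h0
  have expand : (X - Y) * Q * (X - Y) * P
      = X * Q * X * P - X * Q * Y * P - Y * Q * X * P + Y * Q * Y * P := by
    noncomm_ring
  rw [expand, Matrix.trace_add, Matrix.trace_sub, Matrix.trace_sub] at h0
  have hsym := trace_quad_comm hX hY hQpsd.isHermitian.eq hPpsd.isHermitian.eq
  linarith


variable {m : Type*} [Fintype m] [DecidableEq m]

open scoped MatrixOrder in
lemma quad_pos {X S T : Matrix m m ℝ} (hS : S.PosDef) (hT : T.PosDef) (hX : X ≠ 0) :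
    0 < (X * T⁻¹ * Xᴴ * S⁻¹).trace := by
  set q := CFC.sqrt T⁻¹ with hq
  set p := CFC.sqrt S⁻¹ with hp
  have hq2 : q * q = T⁻¹ := CFC.sqrt_mul_sqrt_self _ hT.inv.posSemidef.nonneg
  have hp2 : p * p = S⁻¹ := CFC.sqrt_mul_sqrt_self _ hS.inv.posSemidef.nonneg
  have hqH : qᴴ = q := (CFC.sqrt_nonneg T⁻¹).posSemidef.isHermitian
  have hpH : pᴴ = p := (CFC.sqrt_nonneg S⁻¹).posSemidef.isHermitian
  have hqdet : q.det ≠ 0 := by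
    intro h
    have := hT.inv.det_pos
    rw [← hq2, Matrix.det_mul, h, mul_zero] at this
    exact lt_irrefl _ this
  have hpdet : p.det ≠ 0 := by
    intro h
    have := hS.inv.det_pos
    rw [← hp2, Matrix.det_mul, h, mul_zero] at this
    exact lt_irrefl _ this
  set N := p * X * q with hN
  have hNne : N ≠ 0 := by
    intro h
    apply hX
    have : p⁻¹ * N * q⁻¹ = X := by
      rw [hN, Matrix.mul_assoc p X q, ← Matrix.mul_assoc p⁻¹ p (X * q),
        Matrix.nonsing_inv_mul _ (isUnit_iff_ne_zero.2 hpdet), one_mul,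
        Matrix.mul_assoc, Matrix.mul_nonsing_inv _ (isUnit_iff_ne_zero.2 hqdet), mul_one]
    rw [← this, h, Matrix.mul_zero, Matrix.zero_mul]
  have htr : (X * T⁻¹ * Xᴴ * S⁻¹).trace = (N * Nᴴ).trace := by
    have e2 : N * Nᴴ = (p * (X * (q * (q * Xᴴ)))) * p := by
      rw [hN, Matrix.conjTranspose_mul, Matrix.conjTranspose_mul, hqH, hpH]
      simp only [Matrix.mul_assoc]
    have e3 : p * (p * (X * (q * (q * Xᴴ)))) = S⁻¹ * (X * T⁻¹ * Xᴴ) := by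
      rw [← hp2, ← hq2]; simp only [Matrix.mul_assoc]
    conv_rhs => rw [e2, Matrix.trace_mul_comm, e3]
    rw [Matrix.trace_mul_comm]
  rw [htr]
  have hsum : (N * Nᴴ).trace = ∑ ij ∈ (Finset.univ ×ˢ Finset.univ : Finset (m × m)), (N ij.1 ij.2)^2 := by
    rw [Finset.sum_product]
    simp [Matrix.trace, Matrix.mul_apply, Matrix.diag, Matrix.conjTranspose_apply, sq]
  rw [hsum]
  obtain ⟨i, j, hij⟩ : ∃ i j, N i j ≠ 0 := by
    by_contra h
    push_neg at h
    exact hNne (Matrix.ext fun i j => h i j)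
  exact Finset.sum_pos' (fun x _ => sq_nonneg _) ⟨(i, j), by simp, by positivity⟩


variable {m : Type*} [Fintype m] [DecidableEq m]

lemma inv_sub_inv_psd_s1 {S T : Matrix m m ℝ} (hS : S.PosDef) (hT : T.PosDef)
    (hTS : (T - S).PosSemidef) : (S⁻¹ - T⁻¹).PosSemidef := by
  have hSu : IsUnit S.det := isUnit_iff_ne_zero.2 hS.det_pos.ne'
  have hTu : IsUnit T.det := isUnit_iff_ne_zero.2 hT.det_pos.ne'
  have hSS : S * S⁻¹ = 1 := Matrix.mul_nonsing_inv _ hSu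
  have hSS' : S⁻¹ * S = 1 := Matrix.nonsing_inv_mul _ hSu
  have hTT : T * T⁻¹ = 1 := Matrix.mul_nonsing_inv _ hTu
  have hTT' : T⁻¹ * T = 1 := Matrix.nonsing_inv_mul _ hTu
  have hTT2 : ∀ M : Matrix m m ℝ, T⁻¹ * (T * M) = M := fun M => by
    rw [← Matrix.mul_assoc, hTT', Matrix.one_mul]
  have key : S⁻¹ - T⁻¹ =
      T⁻¹ * (T - S) * T⁻¹ + T⁻¹ * ((T - S) * S⁻¹ * (T - S)) * T⁻¹ := by
    have expand : T⁻¹ * (T - S) * T⁻¹ + T⁻¹ * ((T - S) * S⁻¹ * (T - S)) * T⁻¹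
        = T⁻¹ * ((T - S) * (S⁻¹ * (S + (T - S)))) * T⁻¹ := by
      simp only [Matrix.mul_add, Matrix.add_mul, Matrix.mul_assoc, hSS', Matrix.one_mul]
    rw [expand]
    have hs : S + (T - S) = T := by abel
    rw [hs]
    have hsub : (T - S) * (S⁻¹ * T) = T * (S⁻¹ * T) - S * (S⁻¹ * T) := Matrix.sub_mul _ _ _
    rw [hsub, ← Matrix.mul_assoc S S⁻¹ T, hSS, Matrix.one_mul]
    simp only [Matrix.mul_sub, Matrix.sub_mul, Matrix.mul_assoc, hTT2, hTT, hTT',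
      Matrix.mul_one, Matrix.one_mul]
  rw [key]
  have hTinvH : (T⁻¹)ᴴ = T⁻¹ := hT.inv.isHermitian
  have hEH : (T - S)ᴴ = T - S := hTS.isHermitian
  have h1 : (T⁻¹ * (T - S) * T⁻¹).PosSemidef := by
    have := hTS.mul_mul_conjTranspose_same T⁻¹
    rwa [hTinvH] at this
  have h2 : (T⁻¹ * ((T - S) * S⁻¹ * (T - S)) * T⁻¹).PosSemidef := by
    have hinner : ((T - S) * S⁻¹ * (T - S)).PosSemidef := by
      have := (hS.inv.posSemidef).conjTranspose_mul_mul_same (T - S)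
      rwa [hEH] at this
    have := hinner.mul_mul_conjTranspose_same T⁻¹
    rwa [hTinvH] at this
  exact h1.add h2


section helpers
variable {m : Type*} [Fintype m] [DecidableEq m]

lemma sum_psd_s1 {ι : Type*} {s : Finset ι} {f : ι → Matrix m m ℝ}
    (h : ∀ i ∈ s, (f i).PosSemidef) : (∑ i ∈ s, f i).PosSemidef :=
  Finset.sum_induction f _ (fun _ _ ha hb => ha.add hb) Matrix.PosSemidef.zero h

end helpers

/-- Strict version of the trace inequality: if the tuples `(A₁,…,A_K)` and
`(B₁,…,B_K)` are not identical, then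
`Tr[∑ₖ (Aₖ − Bₖ)((∑_{l≤k} B_l)⁻¹ − (∑_{l≤k} A_l)⁻¹)] > 0`. -/
theorem trace_ineq_pos (n K : ℕ) (hK : 0 < K)
    (A B : ℕ → Matrix (Fin n) (Fin n) ℝ)
    (hA : ∀ k ∈ Finset.Icc 1 K, (A k).PosSemidef)
    (hB : ∀ k ∈ Finset.Icc 1 K, (B k).PosSemidef)
    (hA1 : (A 1).PosDef) (hB1 : (B 1).PosDef)
    (hne : ∃ k ∈ Finset.Icc 1 K, A k ≠ B k) :
    0 < Matrix.trace (∑ k ∈ Finset.Icc 1 K,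
      (A k - B k) *
        ((∑ l ∈ Finset.Icc 1 k, B l)⁻¹ - (∑ l ∈ Finset.Icc 1 k, A l)⁻¹)) := by
  classical
  set S : ℕ → Matrix (Fin n) (Fin n) ℝ := fun k => ∑ l ∈ Finset.Icc 1 k, A l with hSdef
  set T : ℕ → Matrix (Fin n) (Fin n) ℝ := fun k => ∑ l ∈ Finset.Icc 1 k, B l with hTdef
  show 0 < Matrix.trace (∑ k ∈ Finset.Icc 1 K, (A k - B k) * ((T k)⁻¹ - (S k)⁻¹))
  set D : ℕ → Matrix (Fin n) (Fin n) ℝ := fun k => S k - T k with hDdef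
  -- basic facts about partial sums
  have hsuccS : ∀ j : ℕ, S (j + 1) = S j + A (j + 1) := fun j =>
    Finset.sum_Icc_succ_top (by omega) A
  have hsuccT : ∀ j : ℕ, T (j + 1) = T j + B (j + 1) := fun j =>
    Finset.sum_Icc_succ_top (by omega) B
  have hSpsd : ∀ k, k ≤ K → (S k).PosSemidef := fun k hk =>
    sum_psd_s1 fun l hl => hA l (Finset.mem_Icc.2 ⟨(Finset.mem_Icc.1 hl).1,
      le_trans (Finset.mem_Icc.1 hl).2 hk⟩)
  have hTpsd : ∀ k, k ≤ K → (T k).PosSemidef := fun k hk =>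
    sum_psd_s1 fun l hl => hB l (Finset.mem_Icc.2 ⟨(Finset.mem_Icc.1 hl).1,
      le_trans (Finset.mem_Icc.1 hl).2 hk⟩)
  have hSpd : ∀ k, 1 ≤ k → k ≤ K → (S k).PosDef := by
    intro k h1 h2
    have h1m : (1 : ℕ) ∈ Finset.Icc 1 k := Finset.mem_Icc.2 ⟨le_refl 1, h1⟩
    have : S k = A 1 + ∑ l ∈ (Finset.Icc 1 k).erase 1, A l :=
      (Finset.add_sum_erase _ A h1m).symm
    rw [this]
    refine hA1.add_posSemidef (sum_psd_s1 fun l hl => ?_)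
    have hl' := Finset.mem_of_mem_erase hl
    exact hA l (Finset.mem_Icc.2 ⟨(Finset.mem_Icc.1 hl').1,
      le_trans (Finset.mem_Icc.1 hl').2 h2⟩)
  have hTpd : ∀ k, 1 ≤ k → k ≤ K → (T k).PosDef := by
    intro k h1 h2
    have h1m : (1 : ℕ) ∈ Finset.Icc 1 k := Finset.mem_Icc.2 ⟨le_refl 1, h1⟩
    have : T k = B 1 + ∑ l ∈ (Finset.Icc 1 k).erase 1, B l :=
      (Finset.add_sum_erase _ B h1m).symm
    rw [this]
    refine hB1.add_posSemidef (sum_psd_s1 fun l hl => ?_)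
    have hl' := Finset.mem_of_mem_erase hl
    exact hB l (Finset.mem_Icc.2 ⟨(Finset.mem_Icc.1 hl').1,
      le_trans (Finset.mem_Icc.1 hl').2 h2⟩)
  have hDH : ∀ k, k ≤ K → (D k)ᴴ = D k := by
    intro k hk
    show (S k - T k)ᴴ = S k - T k
    rw [Matrix.conjTranspose_sub, (hSpsd k hk).isHermitian.eq, (hTpsd k hk).isHermitian.eq]
  -- the inverse-difference identity
  have hinv : ∀ k, 1 ≤ k → k ≤ K →
      (T k)⁻¹ - (S k)⁻¹ = (T k)⁻¹ * D k * (S k)⁻¹ := by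
    intro k h1 h2
    have hSS : S k * (S k)⁻¹ = 1 :=
      Matrix.mul_nonsing_inv _ (isUnit_iff_ne_zero.2 (hSpd k h1 h2).det_pos.ne')
    have hTT' : (T k)⁻¹ * T k = 1 :=
      Matrix.nonsing_inv_mul _ (isUnit_iff_ne_zero.2 (hTpd k h1 h2).det_pos.ne')
    have : (T k)⁻¹ * (S k - T k) * (S k)⁻¹
        = (T k)⁻¹ * (S k * (S k)⁻¹) - (T k)⁻¹ * T k * (S k)⁻¹ := by
      simp only [Matrix.mul_sub, Matrix.sub_mul, Matrix.mul_assoc]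
    rw [hDdef]
    simp only
    rw [this, hSS, hTT', Matrix.mul_one, Matrix.one_mul]
  -- the increment identity
  have hincr : ∀ k, 1 ≤ k → A k - B k = D k - D (k - 1) := by
    intro k hk
    obtain ⟨j, rfl⟩ : ∃ j, k = j + 1 := ⟨k - 1, by omega⟩
    show A (j + 1) - B (j + 1) = (S (j + 1) - T (j + 1)) - (S (j + 1 - 1) - T (j + 1 - 1))
    have : j + 1 - 1 = j := by omega
    rw [this, hsuccS, hsuccT]
    abel
  -- minimal index where A and B differ
  have hne' : ∃ k, k ∈ Finset.Icc 1 K ∧ A k ≠ B k := by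
    obtain ⟨k, h1, h2⟩ := hne; exact ⟨k, h1, h2⟩
  set k₀ := Nat.find hne' with hk₀def
  obtain ⟨hk₀mem, hk₀ne⟩ := Nat.find_spec hne'
  have hk₀1 : 1 ≤ k₀ := (Finset.mem_Icc.1 hk₀mem).1
  have hk₀K : k₀ ≤ K := (Finset.mem_Icc.1 hk₀mem).2
  have hABeq : ∀ l, 1 ≤ l → l < k₀ → A l = B l := by
    intro l h1 h2
    by_contra h
    exact Nat.find_min hne' h2 ⟨Finset.mem_Icc.2 ⟨h1, le_trans (le_of_lt h2) hk₀K⟩, h⟩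
  have hD0 : ∀ k, k < k₀ → D k = 0 := by
    intro k hk
    show S k - T k = 0
    rw [sub_eq_zero]
    exact Finset.sum_congr rfl fun l hl => hABeq l (Finset.mem_Icc.1 hl).1
      (lt_of_le_of_lt (Finset.mem_Icc.1 hl).2 hk)
  have hDk₀ : D k₀ ≠ 0 := by
    have h1 : A k₀ - B k₀ = D k₀ - D (k₀ - 1) := hincr k₀ hk₀1
    rw [hD0 (k₀ - 1) (by omega), sub_zero] at h1
    intro h
    rw [h] at h1
    exact hk₀ne (sub_eq_zero.1 h1)
  -- the quadratic quantity
  set q : ℕ → ℝ := fun k => (D k * (T k)⁻¹ * D k * (S k)⁻¹).trace with hqdef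
  have hq0 : ∀ k, 1 ≤ k → k ≤ K → 0 ≤ q k := by
    intro k h1 h2
    have h := quad_nonneg (X := D k) (hTpd k h1 h2).inv.posSemidef (hSpd k h1 h2).inv.posSemidef
    rwa [hDH k h2] at h
  have hqk₀ : 0 < q k₀ := by
    have h := quad_pos (X := D k₀) (hSpd k₀ hk₀1 hk₀K) (hTpd k₀ hk₀1 hk₀K) hDk₀
    rwa [hDH k₀ hk₀K] at h
  -- main induction
  have claim : ∀ M, k₀ ≤ M → M ≤ K → q k₀ / 2 + q M / 2 ≤
      ∑ k ∈ Finset.Icc k₀ M, ((A k - B k) * ((T k)⁻¹ - (S k)⁻¹)).trace := by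
    intro M hM
    induction M, hM using Nat.le_induction with
    | base =>
      intro _
      rw [Finset.Icc_self, Finset.sum_singleton]
      have e1 : A k₀ - B k₀ = D k₀ := by
        rw [hincr k₀ hk₀1, hD0 (k₀ - 1) (by omega), sub_zero]
      rw [e1, hinv k₀ hk₀1 hk₀K]
      have e2 : D k₀ * ((T k₀)⁻¹ * D k₀ * (S k₀)⁻¹) = D k₀ * (T k₀)⁻¹ * D k₀ * (S k₀)⁻¹ := by
        simp only [Matrix.mul_assoc]
      rw [e2]
      have : (D k₀ * (T k₀)⁻¹ * D k₀ * (S k₀)⁻¹).trace = q k₀ := rfl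
      rw [this]
      linarith
    | succ M hM ih =>
      intro hM1K
      have hMK : M ≤ K := by omega
      have hM1 : 1 ≤ M := le_trans hk₀1 hM
      rw [Finset.sum_Icc_succ_top (by omega : k₀ ≤ M + 1)]
      have ih' := ih hMK
      -- step bound
      have hstep : q (M + 1) / 2 - q M / 2 ≤
          ((A (M + 1) - B (M + 1)) * ((T (M + 1))⁻¹ - (S (M + 1))⁻¹)).trace := by
        have e1 : A (M + 1) - B (M + 1) = D (M + 1) - D M := by
          have := hincr (M + 1) (by omega)
          rwa [Nat.add_sub_cancel] at this
        rw [e1, hinv (M + 1) (by omega) hM1K]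
        have e2 : (D (M + 1) - D M) * ((T (M + 1))⁻¹ * D (M + 1) * (S (M + 1))⁻¹)
            = D (M + 1) * (T (M + 1))⁻¹ * D (M + 1) * (S (M + 1))⁻¹
              - D M * (T (M + 1))⁻¹ * D (M + 1) * (S (M + 1))⁻¹ := by
          simp only [Matrix.sub_mul, Matrix.mul_assoc]
        rw [e2, Matrix.trace_sub]
        have hQpsd : ((T (M + 1))⁻¹).PosSemidef := (hTpd (M + 1) (by omega) hM1K).inv.posSemidef
        have hPpsd : ((S (M + 1))⁻¹).PosSemidef := (hSpd (M + 1) (by omega) hM1K).inv.posSemidef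
        have hcross := cross_le (X := D M) (Y := D (M + 1)) hQpsd hPpsd
          (hDH M hMK) (hDH (M + 1) hM1K)
        -- monotonicity: trace (D M * Q * D M * P) ≤ q M
        have hmono1 : (D M * (T (M + 1))⁻¹ * D M * (S (M + 1))⁻¹).trace
            ≤ (D M * (T M)⁻¹ * D M * (S (M + 1))⁻¹).trace := by
          refine quad_mono_left hPpsd ?_ (hDH M hMK)
          refine inv_sub_inv_psd_s1 (hTpd M hM1 hMK) (hTpd (M + 1) (by omega) hM1K) ?_
          rw [hsuccT M, add_sub_cancel_left]
          exact hB (M + 1) (Finset.mem_Icc.2 ⟨by omega, hM1K⟩)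
        have hmono2 : (D M * (T M)⁻¹ * D M * (S (M + 1))⁻¹).trace
            ≤ (D M * (T M)⁻¹ * D M * (S M)⁻¹).trace := by
          refine quad_mono_right (hTpd M hM1 hMK).inv.posSemidef ?_ (hDH M hMK)
          refine inv_sub_inv_psd_s1 (hSpd M hM1 hMK) (hSpd (M + 1) (by omega) hM1K) ?_
          rw [hsuccS M, add_sub_cancel_left]
          exact hA (M + 1) (Finset.mem_Icc.2 ⟨by omega, hM1K⟩)
        have hqM : (D M * (T M)⁻¹ * D M * (S M)⁻¹).trace = q M := rfl
        have hqM1 : (D (M + 1) * (T (M + 1))⁻¹ * D (M + 1) * (S (M + 1))⁻¹).trace = q (M + 1) := rfl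
        rw [hqM] at hmono2
        rw [hqM1]
        linarith
      linarith
  -- assemble
  have hsubset : Finset.Icc k₀ K ⊆ Finset.Icc 1 K := Finset.Icc_subset_Icc hk₀1 le_rfl
  have hvanish : ∀ x ∈ Finset.Icc 1 K, x ∉ Finset.Icc k₀ K →
      ((A x - B x) * ((T x)⁻¹ - (S x)⁻¹)).trace = 0 := by
    intro x hx hnx
    have hx1 := Finset.mem_Icc.1 hx
    have hxlt : x < k₀ := by
      by_contra h
      exact hnx (Finset.mem_Icc.2 ⟨by omega, hx1.2⟩)
    rw [sub_eq_zero.2 (hABeq x hx1.1 hxlt), Matrix.zero_mul, Matrix.trace_zero]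
  have hsum : ∑ k ∈ Finset.Icc k₀ K, ((A k - B k) * ((T k)⁻¹ - (S k)⁻¹)).trace
      = ∑ k ∈ Finset.Icc 1 K, ((A k - B k) * ((T k)⁻¹ - (S k)⁻¹)).trace :=
    Finset.sum_subset hsubset hvanish
  rw [Matrix.trace_sum, ← hsum]
  have := claim K hk₀K le_rfl
  have hqK := hq0 K (le_trans hk₀1 hk₀K) le_rfl
  linarith
end

section
/- Let A and B be n×n real positive definite matrices with A ≠ B. Then Tr[ (A − B)(B^{−1} − A^{−1}) ] > 0. -/
open Matrix

lemma aux_trace_pos (n : ℕ) (M D : Matrix (Fin n) (Fin n) ℝ)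
    (hM : M.PosDef) (hD : D ≠ 0) : 0 < Matrix.trace (Dᵀ * M * D) := by
  have hMs : ∀ a b, M a b = M b a := fun a b => by
    have h := congrFun (congrFun hM.isHermitian.eq b) a
    simpa [Matrix.conjTranspose_apply] using h
  have hterm : ∀ j, (Dᵀ * M * D) j j = (fun i => D i j) ⬝ᵥ M *ᵥ (fun i => D i j) := by
    intro j
    simp [Matrix.mul_apply, dotProduct, Matrix.mulVec, Finset.mul_sum,
      Finset.sum_mul, mul_assoc, mul_comm, mul_left_comm]
    exact Finset.sum_congr rfl fun y _ => Finset.sum_congr rfl fun x _ => by rw [hMs x y]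
  obtain ⟨i0, j0, hij⟩ : ∃ i j, D i j ≠ 0 := by
    by_contra h
    push_neg at h
    exact hD (by ext i j; simp [h])
  have hcol : (fun i => D i j0) ≠ 0 := fun h => hij (congrFun h i0)
  rw [Matrix.trace]
  apply Finset.sum_pos'
  · intro j _
    rw [Matrix.diag_apply, hterm j]
    have := hM.posSemidef.dotProduct_mulVec_nonneg (fun i => D i j)
    simpa using this
  · refine ⟨j0, Finset.mem_univ _, ?_⟩
    rw [Matrix.diag_apply, hterm j0]
    have := hM.dotProduct_mulVec_pos hcol
    simpa using this

/-- For distinct positive definite matrices `A`, `B`: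
`Tr[(A − B)(B⁻¹ − A⁻¹)] > 0`. -/
theorem trace_two_posdef_pos (n : ℕ) (A B : Matrix (Fin n) (Fin n) ℝ)
    (hA : A.PosDef) (hB : B.PosDef) (hne : A ≠ B) :
    0 < Matrix.trace ((A - B) * (B⁻¹ - A⁻¹)) := by
  have hAdet : IsUnit A.det := isUnit_iff_ne_zero.mpr (ne_of_gt hA.det_pos)
  have hBdet : IsUnit B.det := isUnit_iff_ne_zero.mpr (ne_of_gt hB.det_pos)
  have hA1 : A * A⁻¹ = 1 := Matrix.mul_nonsing_inv A hAdet
  have hA2 : A⁻¹ * A = 1 := Matrix.nonsing_inv_mul A hAdet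
  have hB1 : B * B⁻¹ = 1 := Matrix.mul_nonsing_inv B hBdet
  have hB2 : B⁻¹ * B = 1 := Matrix.nonsing_inv_mul B hBdet
  set C := A - B with hC
  have hCne : C ≠ 0 := sub_ne_zero.mpr hne
  have hCsymm : Cᵀ = C := by
    have hAs : Aᵀ = A := hA.isHermitian.eq
    have hBs : Bᵀ = B := hB.isHermitian.eq
    simp [hC, Matrix.transpose_sub, hAs, hBs]
  have hBinv : (B⁻¹).PosDef := hB.inv
  have hAinv : (A⁻¹).PosDef := hA.inv
  set S := (open scoped MatrixOrder in CFC.sqrt B⁻¹) with hS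
  have hSS : S * S = B⁻¹ := by
    open scoped MatrixOrder in exact CFC.sqrt_mul_sqrt_self _ hBinv.posSemidef.nonneg
  have hSsymm : Sᵀ = S := by
    open scoped MatrixOrder in exact (CFC.sqrt_nonneg B⁻¹).posSemidef.isHermitian.eq
  have h3 : B * A⁻¹ * (A * B⁻¹) = 1 := by
    rw [Matrix.mul_assoc, ← Matrix.mul_assoc A⁻¹, hA2, Matrix.one_mul, hB1]
  have keyL : (A - B) * (B⁻¹ - A⁻¹) = (A * B⁻¹ - 1) - (1 - B * A⁻¹) := by
    rw [Matrix.sub_mul, Matrix.mul_sub, Matrix.mul_sub, hA1, hB1]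
  have keyR : C * A⁻¹ * (C * B⁻¹) = (A * B⁻¹ - 1) - (1 - B * A⁻¹) := by
    rw [hC, Matrix.sub_mul, hA1, Matrix.sub_mul, Matrix.sub_mul, hB1, Matrix.one_mul,
      Matrix.mul_sub, h3, Matrix.mul_one]
  have key : (A - B) * (B⁻¹ - A⁻¹) = C * A⁻¹ * (C * B⁻¹) := by rw [keyL, keyR]
  have hDne : C * S ≠ 0 := by
    intro h
    apply hCne
    have : C * B⁻¹ = 0 := by rw [← hSS, ← Matrix.mul_assoc, h, Matrix.zero_mul]
    have := congrArg (· * B) this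
    simpa [Matrix.mul_assoc, hB2] using this
  have htr : Matrix.trace (C * A⁻¹ * (C * B⁻¹)) = Matrix.trace ((C * S)ᵀ * A⁻¹ * (C * S)) := by
    rw [← hSS]
    rw [Matrix.transpose_mul, hSsymm, hCsymm]
    rw [show C * A⁻¹ * (C * (S * S)) = (C * A⁻¹ * C * S) * S by
      simp only [Matrix.mul_assoc]]
    rw [Matrix.trace_mul_comm]
    simp only [Matrix.mul_assoc]
  rw [key, htr]
  exact aux_trace_pos n A⁻¹ (C * S) hAinv hDne
end

section
/- Let K be a positive integer, let N_1, ..., N_K be n×n real symmetric matrices with N_1 positive definite and N_k − N_{k−1} positive semidefinite for k = 2, ..., K (degradedness), and let Q̃_1, ..., Q̃_K and Q̂_1, ..., Q̂_K be n×n real positive semidefinite matrices. If r_1 ≥ r_2 ≥ ... ≥ r_K > 0 are real numbers, then Tr[ ∑_{k=1}^{K} r_k (Q̂_k − Q̃_k) ( (N_k + ∑_{i=1}^{k} Q̃_i)^{−1} − (N_k + ∑_{i=1}^{k} Q̂_i)^{−1} ) ] ≥ 0. -/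
open Finset Matrix

namespace AdbcAux
open scoped MatrixOrder
variable {n : ℕ}

lemma trace_nonneg_of_psd {M : Matrix (Fin n) (Fin n) ℝ} (hM : M.PosSemidef) :
    0 ≤ M.trace := by
  rw [Matrix.trace]
  refine Finset.sum_nonneg fun i _ => ?_
  have h := hM.dotProduct_mulVec_nonneg (Pi.single i 1)
  simpa [dotProduct, Pi.single_apply, Matrix.mulVec, Matrix.diag] using h

lemma trace_mul_nonneg {M P : Matrix (Fin n) (Fin n) ℝ} (hM : M.PosSemidef) (hP : P.PosSemidef) :
    0 ≤ (M * P).trace := by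
  have hC : CFC.sqrt M * CFC.sqrt M = M := CFC.sqrt_mul_sqrt_self M hM.nonneg
  have h1 : (CFC.sqrt M * P * (CFC.sqrt M)ᴴ).PosSemidef := hP.mul_mul_conjTranspose_same (CFC.sqrt M)
  rw [(CFC.sqrt_nonneg M).posSemidef.isHermitian.eq] at h1
  have h2 : (CFC.sqrt M * P * CFC.sqrt M).trace = (M * P).trace := by
    rw [Matrix.trace_mul_cycle, hC]
  rw [← h2]
  exact trace_nonneg_of_psd h1

lemma phi_nonneg {S X Y : Matrix (Fin n) (Fin n) ℝ} (hS : S.IsHermitian)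
    (hX : X.PosSemidef) (hY : Y.PosSemidef) : 0 ≤ (S * X * S * Y).trace := by
  have h := hX.mul_mul_conjTranspose_same S
  rw [hS.eq] at h
  exact trace_mul_nonneg h hY

lemma phi_symm {S T X Y : Matrix (Fin n) (Fin n) ℝ} (hS : S.IsHermitian) (hT : T.IsHermitian)
    (hX : X.IsHermitian) (hY : Y.IsHermitian) :
    (S * X * T * Y).trace = (T * X * S * Y).trace := by
  have h : (S * X * T * Y).trace = ((S * X * T * Y)ᴴ).trace := by
    rw [Matrix.trace_conjTranspose, star_trivial]
  rw [h]
  simp only [Matrix.conjTranspose_mul, hS.eq, hT.eq, hX.eq, hY.eq]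
  rw [Matrix.trace_mul_comm]
  simp [Matrix.mul_assoc]

lemma phi_mono_left {S X X' Y : Matrix (Fin n) (Fin n) ℝ} (hS : S.IsHermitian)
    (hXX : (X' - X).PosSemidef) (hY : Y.PosSemidef) :
    (S * X * S * Y).trace ≤ (S * X' * S * Y).trace := by
  have h := phi_nonneg hS hXX hY
  have e : S * (X' - X) * S * Y = S * X' * S * Y - S * X * S * Y := by noncomm_ring
  rw [e, Matrix.trace_sub] at h
  linarith

lemma phi_mono_right {S X Y Y' : Matrix (Fin n) (Fin n) ℝ} (hS : S.IsHermitian)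
    (hX : X.PosSemidef) (hYY : (Y' - Y).PosSemidef) :
    (S * X * S * Y).trace ≤ (S * X * S * Y').trace := by
  have hSXS := hX.mul_mul_conjTranspose_same S
  rw [hS.eq] at hSXS
  have h := trace_mul_nonneg hSXS hYY
  have e : S * X * S * (Y' - Y) = S * X * S * Y' - S * X * S * Y := by noncomm_ring
  rw [e, Matrix.trace_sub] at h
  linarith

lemma inv_sub_inv' {A B : Matrix (Fin n) (Fin n) ℝ} (hA : A.PosDef) (hB : B.PosDef) :
    A⁻¹ - B⁻¹ = A⁻¹ * (B - A) * B⁻¹ := by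
  have hAd : IsUnit A.det := hA.det_pos.ne'.isUnit
  have hBd : IsUnit B.det := hB.det_pos.ne'.isUnit
  rw [Matrix.mul_sub, Matrix.sub_mul, Matrix.nonsing_inv_mul _ hAd, Matrix.one_mul,
    Matrix.mul_assoc, Matrix.mul_nonsing_inv _ hBd, Matrix.mul_one]

lemma mulVec_dot (M : Matrix (Fin n) (Fin n) ℝ) (a b : Fin n → ℝ) :
    (M *ᵥ a) ⬝ᵥ b = a ⬝ᵥ (Mᵀ *ᵥ b) := by
  rw [dotProduct_comm, Matrix.dotProduct_mulVec, dotProduct_comm,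
    ← Matrix.mulVec_transpose]

lemma dot_sq (v : Fin n → ℝ) : v ⬝ᵥ v = ∑ i, v i ^ 2 := by
  simp [dotProduct, sq]

lemma cauchy (v w : Fin n → ℝ) : (v ⬝ᵥ w) ^ 2 ≤ (v ⬝ᵥ v) * (w ⬝ᵥ w) := by
  rw [dot_sq, dot_sq]
  exact Finset.sum_mul_sq_le_sq_mul_sq Finset.univ v w

lemma inv_antitone {A B : Matrix (Fin n) (Fin n) ℝ} (hA : A.PosDef) (hB : B.PosDef)
    (hAB : (B - A).PosSemidef) : (A⁻¹ - B⁻¹).PosSemidef := by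
  have hAinv : (A⁻¹).PosDef := hA.inv
  have hBinv : (B⁻¹).PosDef := hB.inv
  refine Matrix.PosSemidef.of_dotProduct_mulVec_nonneg (hAinv.isHermitian.sub hBinv.isHermitian) fun x => ?_
  set C := CFC.sqrt A with hCdef
  have hCpsd : C.PosSemidef := (CFC.sqrt_nonneg A).posSemidef
  have hCC : C * C = A := CFC.sqrt_mul_sqrt_self A hA.posSemidef.nonneg
  have hCsymm : Cᵀ = C := by
    have h := hCpsd.isHermitian.eq
    simpa [Matrix.conjTranspose_eq_transpose_of_trivial] using h
  have hCdet : IsUnit C.det := by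
    have hAdet : A.det ≠ 0 := hA.det_pos.ne'
    have h : C.det * C.det = A.det := by rw [← Matrix.det_mul, hCC]
    exact isUnit_iff_ne_zero.2 (fun h0 => hAdet (by rw [← h, h0, mul_zero]))
  have hCCinv : C * C⁻¹ = 1 := Matrix.mul_nonsing_inv _ hCdet
  have hCinvT : (C⁻¹)ᵀ = C⁻¹ := by rw [Matrix.transpose_nonsing_inv, hCsymm]
  have hBdet : IsUnit B.det := hB.det_pos.ne'.isUnit
  set u := B⁻¹ *ᵥ x with hu
  set v := C *ᵥ u with hv
  set w := C⁻¹ *ᵥ x with hw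
  set t := x ⬝ᵥ (B⁻¹ *ᵥ x) with ht
  set s := x ⬝ᵥ (A⁻¹ *ᵥ x) with hs
  have hux : u ⬝ᵥ x = t := by rw [ht, hu, dotProduct_comm]
  have hvw : v ⬝ᵥ w = t := by
    rw [hv, mulVec_dot, hCsymm, hw, Matrix.mulVec_mulVec, hCCinv, Matrix.one_mulVec, hux]
  have hvv : v ⬝ᵥ v = u ⬝ᵥ (A *ᵥ u) := by
    rw [hv, mulVec_dot, hCsymm, Matrix.mulVec_mulVec, hCC]
  have hww : w ⬝ᵥ w = s := by
    rw [hw, mulVec_dot, hCinvT, Matrix.mulVec_mulVec, hs]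
    congr 2
    rw [← Matrix.mul_inv_rev, hCC]
  have hle : u ⬝ᵥ (A *ᵥ u) ≤ u ⬝ᵥ (B *ᵥ u) := by
    have h := hAB.dotProduct_mulVec_nonneg u
    rw [star_trivial, Matrix.sub_mulVec, dotProduct_sub] at h
    linarith
  have hBu : u ⬝ᵥ (B *ᵥ u) = t := by
    rw [hu, Matrix.mulVec_mulVec, Matrix.mul_nonsing_inv _ hBdet, Matrix.one_mulVec, ← hu, hux]
  have ht0 : 0 ≤ t := by
    have h := hBinv.posSemidef.dotProduct_mulVec_nonneg x
    rwa [star_trivial] at h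
  have hs0 : 0 ≤ s := by
    have h := hAinv.posSemidef.dotProduct_mulVec_nonneg x
    rwa [star_trivial] at h
  have hcs : t ^ 2 ≤ t * s := by
    calc t ^ 2 = (v ⬝ᵥ w) ^ 2 := by rw [hvw]
      _ ≤ (v ⬝ᵥ v) * (w ⬝ᵥ w) := cauchy v w
      _ = (u ⬝ᵥ (A *ᵥ u)) * s := by rw [hvv, hww]
      _ ≤ (u ⬝ᵥ (B *ᵥ u)) * s := mul_le_mul_of_nonneg_right hle hs0
      _ = t * s := by rw [hBu]
  have hts : t ≤ s := by nlinarith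
  rw [star_trivial, Matrix.sub_mulVec, dotProduct_sub, ← hs, ← ht]
  linarith

end AdbcAux

open AdbcAux

/-- DSC quantity of the ADBC game is nonnegative for ordered weights
`r₁ ≥ r₂ ≥ … ≥ r_K > 0`. -/
theorem adbc_dsc_nonneg (n K : ℕ) (hK : 0 < K)
    (N Qt Qh : ℕ → Matrix (Fin n) (Fin n) ℝ)
    (hNsymm : ∀ k ∈ Finset.Icc 1 K, (N k).IsSymm)
    (hN1 : (N 1).PosDef)
    (hdeg : ∀ k ∈ Finset.Icc 2 K, (N k - N (k - 1)).PosSemidef)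
    (hQt : ∀ k ∈ Finset.Icc 1 K, (Qt k).PosSemidef)
    (hQh : ∀ k ∈ Finset.Icc 1 K, (Qh k).PosSemidef)
    (r : ℕ → ℝ)
    (hrmono : ∀ k ∈ Finset.Icc 1 (K - 1), r (k + 1) ≤ r k)
    (hrK : 0 < r K) :
    0 ≤ Matrix.trace (∑ k ∈ Finset.Icc 1 K,
      r k • ((Qh k - Qt k) *
        ((N k + ∑ i ∈ Finset.Icc 1 k, Qt i)⁻¹ -
         (N k + ∑ i ∈ Finset.Icc 1 k, Qh i)⁻¹))) := by
  classical
  let A : ℕ → Matrix (Fin n) (Fin n) ℝ := fun k => N k + ∑ i ∈ Finset.Icc 1 k, Qt i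
  let B : ℕ → Matrix (Fin n) (Fin n) ℝ := fun k => N k + ∑ i ∈ Finset.Icc 1 k, Qh i
  let S : ℕ → Matrix (Fin n) (Fin n) ℝ := fun k => ∑ i ∈ Finset.Icc 1 k, (Qh i - Qt i)
  let g : ℕ → ℝ := fun k => ((S k) * (A k)⁻¹ * (S k) * (B k)⁻¹).trace
  -- positive definiteness of the noise matrices
  have hNpos : ∀ k, 1 ≤ k → k ≤ K → (N k).PosDef := by
    intro k hk1
    induction k, hk1 using Nat.le_induction with
    | base => intro _; exact hN1
    | succ m hm ih =>
      intro hmK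
      have hd := hdeg (m + 1) (Finset.mem_Icc.2 ⟨by omega, hmK⟩)
      simp only [Nat.add_sub_cancel] at hd
      have h := (ih (by omega)).add_posSemidef hd
      have e : N m + (N (m + 1) - N m) = N (m + 1) := by abel
      rwa [e] at h
  have hsQt : ∀ k, k ≤ K → (∑ i ∈ Finset.Icc 1 k, Qt i).PosSemidef := by
    intro k hk
    refine Finset.sum_induction _ _ (fun a b ha hb => ha.add hb) Matrix.PosSemidef.zero ?_
    intro i hi
    exact hQt i (Finset.mem_Icc.2 ⟨(Finset.mem_Icc.1 hi).1, le_trans (Finset.mem_Icc.1 hi).2 hk⟩)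
  have hsQh : ∀ k, k ≤ K → (∑ i ∈ Finset.Icc 1 k, Qh i).PosSemidef := by
    intro k hk
    refine Finset.sum_induction _ _ (fun a b ha hb => ha.add hb) Matrix.PosSemidef.zero ?_
    intro i hi
    exact hQh i (Finset.mem_Icc.2 ⟨(Finset.mem_Icc.1 hi).1, le_trans (Finset.mem_Icc.1 hi).2 hk⟩)
  have hApd : ∀ k, 1 ≤ k → k ≤ K → (A k).PosDef := fun k hk1 hkK =>
    (hNpos k hk1 hkK).add_posSemidef (hsQt k hkK)
  have hBpd : ∀ k, 1 ≤ k → k ≤ K → (B k).PosDef := fun k hk1 hkK =>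
    (hNpos k hk1 hkK).add_posSemidef (hsQh k hkK)
  have hSsym : ∀ k, k ≤ K → (S k).IsHermitian := by
    intro k hk
    refine Finset.sum_induction _ _ (fun a b ha hb => ha.add hb) Matrix.isHermitian_zero ?_
    intro i hi
    have hi' := Finset.mem_Icc.1 hi
    exact ((hQh i (Finset.mem_Icc.2 ⟨hi'.1, le_trans hi'.2 hk⟩)).isHermitian).sub
      ((hQt i (Finset.mem_Icc.2 ⟨hi'.1, le_trans hi'.2 hk⟩)).isHermitian)
  have hBA : ∀ k, B k - A k = S k := by
    intro k
    show (N k + ∑ i ∈ Finset.Icc 1 k, Qh i) - (N k + ∑ i ∈ Finset.Icc 1 k, Qt i)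
      = ∑ i ∈ Finset.Icc 1 k, (Qh i - Qt i)
    rw [Finset.sum_sub_distrib]
    abel
  have hAstep : ∀ m, 1 ≤ m → m + 1 ≤ K → (A (m + 1) - A m).PosSemidef := by
    intro m hm1 hmK
    have hd := hdeg (m + 1) (Finset.mem_Icc.2 ⟨by omega, hmK⟩)
    simp only [Nat.add_sub_cancel] at hd
    have h := hd.add (hQt (m + 1) (Finset.mem_Icc.2 ⟨by omega, hmK⟩))
    have e : A (m + 1) - A m = (N (m + 1) - N m) + Qt (m + 1) := by
      show (N (m + 1) + ∑ i ∈ Finset.Icc 1 (m + 1), Qt i)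
        - (N m + ∑ i ∈ Finset.Icc 1 m, Qt i) = _
      rw [Finset.sum_Icc_succ_top (by omega : 1 ≤ m + 1)]
      abel
    rwa [e]
  have hBstep : ∀ m, 1 ≤ m → m + 1 ≤ K → (B (m + 1) - B m).PosSemidef := by
    intro m hm1 hmK
    have hd := hdeg (m + 1) (Finset.mem_Icc.2 ⟨by omega, hmK⟩)
    simp only [Nat.add_sub_cancel] at hd
    have h := hd.add (hQh (m + 1) (Finset.mem_Icc.2 ⟨by omega, hmK⟩))
    have e : B (m + 1) - B m = (N (m + 1) - N m) + Qh (m + 1) := by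
      show (N (m + 1) + ∑ i ∈ Finset.Icc 1 (m + 1), Qh i)
        - (N m + ∑ i ∈ Finset.Icc 1 m, Qh i) = _
      rw [Finset.sum_Icc_succ_top (by omega : 1 ≤ m + 1)]
      abel
    rwa [e]
  have hS0 : S 0 = 0 := by
    show ∑ i ∈ Finset.Icc 1 0, (Qh i - Qt i) = 0
    simp
  have hg0 : g 0 = 0 := by
    show ((S 0) * (A 0)⁻¹ * (S 0) * (B 0)⁻¹).trace = 0
    rw [hS0]
    simp
  have hgnn : ∀ k, k ≤ K → 0 ≤ g k := by
    intro k hk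
    rcases Nat.eq_zero_or_pos k with h0 | h1
    · rw [h0, hg0]
    · exact phi_nonneg (hSsym k hk) (hApd k h1 hk).inv.posSemidef (hBpd k h1 hk).inv.posSemidef
  -- the per-index inequality
  have step : ∀ k, 1 ≤ k → k ≤ K →
      (1 / 2 : ℝ) * (g k - g (k - 1)) ≤ ((Qh k - Qt k) * ((A k)⁻¹ - (B k)⁻¹)).trace := by
    intro k hk1 hkK
    obtain ⟨m, rfl⟩ : ∃ m, k = m + 1 := ⟨k - 1, by omega⟩
    simp only [Nat.add_sub_cancel]
    have hA1 := hApd (m + 1) (by omega) hkK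
    have hB1 := hBpd (m + 1) (by omega) hkK
    set X := (A (m + 1))⁻¹ with hXdef
    set Y := (B (m + 1))⁻¹ with hYdef
    have hXpd : X.PosDef := hA1.inv
    have hYpd : Y.PosDef := hB1.inv
    set D := Qh (m + 1) - Qt (m + 1) with hDdef
    have hDh : D.IsHermitian :=
      ((hQh (m + 1) (Finset.mem_Icc.2 ⟨by omega, hkK⟩)).isHermitian).sub
        ((hQt (m + 1) (Finset.mem_Icc.2 ⟨by omega, hkK⟩)).isHermitian)
    have hSmh : (S m).IsHermitian := hSsym m (by omega)
    have hSk : S (m + 1) = S m + D := by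
      show ∑ i ∈ Finset.Icc 1 (m + 1), (Qh i - Qt i) = _
      rw [Finset.sum_Icc_succ_top (by omega : 1 ≤ m + 1)]
    have e1 : X - Y = X * S (m + 1) * Y := by
      rw [hXdef, hYdef, inv_sub_inv' hA1 hB1, hBA]
    have expand1 : D * (X - Y) = D * X * S m * Y + D * X * D * Y := by
      rw [e1, hSk]
      noncomm_ring
    have expand2 : S (m + 1) * X * S (m + 1) * Y
        = S m * X * S m * Y + S m * X * D * Y + D * X * S m * Y + D * X * D * Y := by
      rw [hSk]
      noncomm_ring
    have hsymm : (S m * X * D * Y).trace = (D * X * S m * Y).trace :=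
      phi_symm hSmh hDh hXpd.isHermitian hYpd.isHermitian
    have hDD : 0 ≤ (D * X * D * Y).trace :=
      phi_nonneg hDh hXpd.posSemidef hYpd.posSemidef
    have hmono : (S m * X * S m * Y).trace ≤ g m := by
      rcases Nat.eq_zero_or_pos m with h0 | h1
      · subst h0
        rw [hS0]
        simp [g, hS0]
      · have hXanti : ((A m)⁻¹ - X).PosSemidef :=
          inv_antitone (hApd m h1 (by omega)) hA1 (hAstep m h1 hkK)
        have hYanti : ((B m)⁻¹ - Y).PosSemidef :=
          inv_antitone (hBpd m h1 (by omega)) hB1 (hBstep m h1 hkK)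
        calc (S m * X * S m * Y).trace
            ≤ (S m * (A m)⁻¹ * S m * Y).trace := phi_mono_left hSmh hXanti hYpd.posSemidef
          _ ≤ (S m * (A m)⁻¹ * S m * (B m)⁻¹).trace :=
              phi_mono_right hSmh (hApd m h1 (by omega)).inv.posSemidef hYanti
          _ = g m := rfl
    have hgk : g (m + 1) = (S m * X * S m * Y).trace + 2 * (D * X * S m * Y).trace
        + (D * X * D * Y).trace := by
      show (S (m + 1) * X * S (m + 1) * Y).trace = _
      rw [expand2]
      rw [Matrix.trace_add, Matrix.trace_add, Matrix.trace_add, hsymm]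
      ring
    have htk : ((Qh (m + 1) - Qt (m + 1)) * (X - Y)).trace
        = (D * X * S m * Y).trace + (D * X * D * Y).trace := by
      rw [← hDdef, expand1, Matrix.trace_add]
    rw [htk]
    linarith
  -- positivity of the weights
  have hrge : ∀ d k, 1 ≤ k → k + d = K → r K ≤ r k := by
    intro d
    induction d with
    | zero =>
      intro k _ h2
      have : k = K := by omega
      rw [this]
    | succ d ih =>
      intro k h1 h2
      have h3 := hrmono k (Finset.mem_Icc.2 ⟨h1, by omega⟩)
      exact le_trans (ih (k + 1) (by omega) (by omega)) h3
  have hrpos : ∀ k, 1 ≤ k → k ≤ K → 0 < r k := by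
    intro k h1 h2
    exact lt_of_lt_of_le hrK (hrge (K - k) k h1 (by omega))
  -- Abel summation
  have habel : ∀ m, 1 ≤ m → m ≤ K →
      r m * g m ≤ ∑ k ∈ Finset.Icc 1 m, r k * (g k - g (k - 1)) := by
    intro m hm1
    induction m, hm1 using Nat.le_induction with
    | base =>
      intro _
      rw [Finset.Icc_self, Finset.sum_singleton]
      norm_num [hg0]
    | succ m hm ih =>
      intro hmK
      rw [Finset.sum_Icc_succ_top (by omega : 1 ≤ m + 1)]
      have h1 := ih (by omega)
      have h2 := hgnn m (by omega)
      have h3 := hrmono m (Finset.mem_Icc.2 ⟨hm, by omega⟩)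
      simp only [Nat.add_sub_cancel]
      nlinarith
  -- putting everything together
  have key : ∀ k ∈ Finset.Icc 1 K,
      (1 / 2 : ℝ) * (r k * (g k - g (k - 1)))
        ≤ (r k • ((Qh k - Qt k) * ((A k)⁻¹ - (B k)⁻¹))).trace := by
    intro k hk
    obtain ⟨hk1, hkK⟩ := Finset.mem_Icc.1 hk
    rw [Matrix.trace_smul, smul_eq_mul]
    have h1 := step k hk1 hkK
    have h2 : 0 ≤ r k := (hrpos k hk1 hkK).le
    calc (1 / 2 : ℝ) * (r k * (g k - g (k - 1)))
        = r k * ((1 / 2 : ℝ) * (g k - g (k - 1))) := by ring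
      _ ≤ r k * ((Qh k - Qt k) * ((A k)⁻¹ - (B k)⁻¹)).trace :=
          mul_le_mul_of_nonneg_left h1 h2
  have final : (0 : ℝ) ≤ ∑ k ∈ Finset.Icc 1 K,
      (r k • ((Qh k - Qt k) * ((A k)⁻¹ - (B k)⁻¹))).trace := by
    have hgK := hgnn K le_rfl
    have hA := habel K hK le_rfl
    calc (0 : ℝ) ≤ (1 / 2 : ℝ) * (r K * g K) := by positivity
      _ ≤ (1 / 2 : ℝ) * ∑ k ∈ Finset.Icc 1 K, r k * (g k - g (k - 1)) := by linarith
      _ = ∑ k ∈ Finset.Icc 1 K, (1 / 2 : ℝ) * (r k * (g k - g (k - 1))) := by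
          rw [Finset.mul_sum]
      _ ≤ _ := Finset.sum_le_sum key
  rw [Matrix.trace_sum]
  exact final
end

section
/- Let K be a positive integer, let N_1, ..., N_K be n×n real symmetric matrices with N_1 positive definite and N_k − N_{k−1} positive semidefinite for k = 2, ..., K (degradedness), and let Q̃_1, ..., Q̃_K and Q̂_1, ..., Q̂_K be n×n real positive semidefinite matrices with (Q̃_1, ..., Q̃_K) ≠ (Q̂_1, ..., Q̂_K). If r_1 ≥ r_2 ≥ ... ≥ r_K > 0 are real numbers, then Tr[ ∑_{k=1}^{K} r_k (Q̂_k − Q̃_k) ( (N_k + ∑_{i=1}^{k} Q̃_i)^{−1} − (N_k + ∑_{i=1}^{k} Q̂_i)^{−1} ) ] > 0. -/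
open Finset Matrix
namespace Matrix.PosSemidef
open scoped MatrixOrder

noncomputable def sqrt {n : ℕ} {A : Matrix (Fin n) (Fin n) ℝ} (_ : A.PosSemidef) :
    Matrix (Fin n) (Fin n) ℝ := CFC.sqrt A

lemma posSemidef_sqrt {n : ℕ} {A : Matrix (Fin n) (Fin n) ℝ} (hA : A.PosSemidef) :
    hA.sqrt.PosSemidef :=
  Matrix.nonneg_iff_posSemidef.mp (CFC.sqrt_nonneg A)

lemma sqrt_mul_self {n : ℕ} {A : Matrix (Fin n) (Fin n) ℝ} (hA : A.PosSemidef) :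
    hA.sqrt * hA.sqrt = A :=
  CFC.sqrt_mul_sqrt_self A (Matrix.nonneg_iff_posSemidef.mpr hA)

end Matrix.PosSemidef
namespace ADBCAux
variable {n : ℕ}
local notation "Mat" => Matrix (Fin n) (Fin n) ℝ

lemma transpose_of_hermitian {M : Mat} (h : M.IsHermitian) : Mᵀ = M := by
  conv_rhs => rw [← h.eq]
  ext i j; simp [Matrix.conjTranspose_apply]

lemma trace_transpose_mul_self_nonneg (M : Mat) : 0 ≤ (Mᵀ * M).trace := by
  classical
  refine Finset.sum_nonneg fun j _ => ?_
  simp only [Matrix.diag_apply, Matrix.mul_apply, Matrix.transpose_apply]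
  exact Finset.sum_nonneg fun i _ => mul_self_nonneg _

lemma eq_zero_of_trace_transpose_mul_self {M : Mat}
    (h : (Mᵀ * M).trace = 0) : M = 0 := by
  classical
  ext i j
  have h1 : ∀ j ∈ Finset.univ (α := Fin n), (0:ℝ) ≤ (Mᵀ * M).diag j := by
    intro j _
    simp only [Matrix.diag_apply, Matrix.mul_apply, Matrix.transpose_apply]
    exact Finset.sum_nonneg fun i _ => mul_self_nonneg _
  have h2 := (Finset.sum_eq_zero_iff_of_nonneg h1).mp h j (Finset.mem_univ j)
  simp only [Matrix.diag_apply, Matrix.mul_apply, Matrix.transpose_apply] at h2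
  have h3 := (Finset.sum_eq_zero_iff_of_nonneg (fun i _ => mul_self_nonneg (M i j))).mp h2
    i (Finset.mem_univ i)
  simpa using mul_self_eq_zero.mp h3

lemma trace_psd_mul_key {A B : Mat} (hA : A.PosSemidef) (hB : B.PosSemidef) :
    (A * B).trace = ((hB.sqrt * hA.sqrt)ᵀ * (hB.sqrt * hA.sqrt)).trace := by
  set S := hA.sqrt with hSdef
  set T := hB.sqrt with hTdef
  have hS : Sᵀ = S := transpose_of_hermitian hA.posSemidef_sqrt.isHermitian
  have hT : Tᵀ = T := transpose_of_hermitian hB.posSemidef_sqrt.isHermitian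
  have h1 : (T * S)ᵀ * (T * S) = (S * (T * T)) * S := by
    rw [Matrix.transpose_mul, hS, hT]; noncomm_ring
  rw [h1, Matrix.trace_mul_comm (S * (T * T)) S, ← Matrix.mul_assoc,
    hA.sqrt_mul_self, hB.sqrt_mul_self]

lemma trace_psd_mul_nonneg {A B : Mat} (hA : A.PosSemidef) (hB : B.PosSemidef) :
    0 ≤ (A * B).trace := by
  rw [trace_psd_mul_key hA hB]; exact trace_transpose_mul_self_nonneg _

lemma trace_psd_mul_posdef_pos {A B : Mat} (hA : A.PosSemidef) (hA0 : A ≠ 0)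
    (hB : B.PosDef) : 0 < (A * B).trace := by
  rcases lt_or_eq_of_le (trace_psd_mul_nonneg hA hB.posSemidef) with h | h
  · exact h
  exfalso
  rw [trace_psd_mul_key hA hB.posSemidef] at h
  have hTS : hB.posSemidef.sqrt * hA.sqrt = 0 :=
    eq_zero_of_trace_transpose_mul_self h.symm
  have hBA : B * A = 0 := by
    calc B * A = hB.posSemidef.sqrt * (hB.posSemidef.sqrt * hA.sqrt) * hA.sqrt := by
          rw [← Matrix.mul_assoc, Matrix.mul_assoc _ hA.sqrt hA.sqrt,
            hB.posSemidef.sqrt_mul_self, hA.sqrt_mul_self]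
      _ = 0 := by rw [hTS, Matrix.mul_zero, Matrix.zero_mul]
  have hAz : A = 0 := by
    calc A = B⁻¹ * (B * A) := by
          rw [← Matrix.mul_assoc,
            Matrix.nonsing_inv_mul _ ((Matrix.isUnit_iff_isUnit_det _).mp hB.isUnit),
            Matrix.one_mul]
      _ = 0 := by rw [hBA, Matrix.mul_zero]
  exact hA0 hAz

lemma conj_psd {P : Mat} (hP : P.PosSemidef) {S : Mat} (hS : S.IsHermitian) :
    (S * P * S).PosSemidef := by
  have := hP.mul_mul_conjTranspose_same S
  rwa [hS.eq] at this

lemma q_nonneg {S P Q : Mat} (hS : S.IsHermitian) (hP : P.PosSemidef)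
    (hQ : Q.PosSemidef) : 0 ≤ (S * P * S * Q).trace :=
  trace_psd_mul_nonneg (conj_psd hP hS) hQ

lemma q_pos {S P Q : Mat} (hS : S.IsHermitian) (hS0 : S ≠ 0) (hP : P.PosDef)
    (hQ : Q.PosDef) : 0 < (S * P * S * Q).trace := by
  refine trace_psd_mul_posdef_pos (conj_psd hP.posSemidef hS) ?_ hQ
  intro h0
  have hSS : (S * S).PosSemidef := by
    have := Matrix.posSemidef_conjTranspose_mul_self S
    rwa [hS.eq] at this
  have hSS0 : S * S ≠ 0 := by
    intro h
    apply hS0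
    apply eq_zero_of_trace_transpose_mul_self (M := S)
    rw [transpose_of_hermitian hS, h, Matrix.trace_zero]
  have hpos : 0 < ((S * S) * P).trace := trace_psd_mul_posdef_pos hSS hSS0 hP
  have : ((S * S) * P).trace = (S * P * S).trace := by
    rw [Matrix.mul_assoc, Matrix.trace_mul_comm S (S * P)]
  rw [this, h0, Matrix.trace_zero] at hpos
  exact lt_irrefl 0 hpos

lemma q_mono {S P P' Q Q' : Mat} (hS : S.IsHermitian) (hP' : P'.PosSemidef)
    (hQ' : Q'.PosSemidef) (hPP : (P - P').PosSemidef) (hQQ : (Q - Q').PosSemidef) :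
    (S * P' * S * Q').trace ≤ (S * P * S * Q).trace := by
  have hQ : Q.PosSemidef := by
    have := hQ'.add hQQ
    rwa [add_sub_cancel] at this
  have step1 : (S * P' * S * Q').trace ≤ (S * P' * S * Q).trace := by
    have h := trace_psd_mul_nonneg (conj_psd hP' hS) hQQ
    rw [Matrix.mul_sub, Matrix.trace_sub] at h
    linarith
  have step2 : (S * P' * S * Q).trace ≤ (S * P * S * Q).trace := by
    have hconj : (S * (P - P') * S).PosSemidef := conj_psd hPP hS
    have h := trace_psd_mul_nonneg hconj hQ
    have hexp : (S * (P - P') * S * Q).trace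
        = (S * P * S * Q).trace - (S * P' * S * Q).trace := by
      simp only [Matrix.mul_sub, Matrix.sub_mul, Matrix.trace_sub]
    rw [hexp] at h
    linarith
  linarith

lemma trace_swap {X Y P Q : Mat} (hX : X.IsHermitian) (hY : Y.IsHermitian)
    (hP : P.IsHermitian) (hQ : Q.IsHermitian) :
    (Y * P * X * Q).trace = (X * P * Y * Q).trace := by
  have hX' := transpose_of_hermitian hX
  have hY' := transpose_of_hermitian hY
  have hP' := transpose_of_hermitian hP
  have hQ' := transpose_of_hermitian hQ
  rw [← Matrix.trace_transpose (Y * P * X * Q)]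
  simp only [Matrix.transpose_mul, hX', hY', hP', hQ']
  rw [Matrix.trace_mul_comm Q (X * (P * Y))]
  congr 1
  noncomm_ring

lemma cross_ineq {X Y P Q : Mat} (hX : X.IsHermitian) (hY : Y.IsHermitian)
    (hP : P.PosSemidef) (hQ : Q.PosSemidef) :
    (X * P * X * Q).trace + (Y * P * Y * Q).trace - 2 * (X * P * Y * Q).trace ≥ 0 := by
  have hXY : (X - Y).IsHermitian := hX.sub hY
  have h := q_nonneg hXY hP hQ
  have hexp : ((X - Y) * P * (X - Y) * Q).trace
      = (X * P * X * Q).trace - (X * P * Y * Q).trace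
        - (Y * P * X * Q).trace + (Y * P * Y * Q).trace := by
    simp only [Matrix.mul_sub, Matrix.sub_mul, Matrix.trace_sub, Matrix.trace_add]
    ring
  rw [hexp, trace_swap hX hY hP.isHermitian hQ.isHermitian] at h
  linarith


lemma inv_sub_inv_eq {A B : Mat} (hA : IsUnit A.det) (hB : IsUnit B.det) :
    A⁻¹ - B⁻¹ = A⁻¹ * (B - A) * B⁻¹ := by
  have h1 : A⁻¹ * (B - A) * B⁻¹ = A⁻¹ * (B * B⁻¹) - (A⁻¹ * A) * B⁻¹ := by
    simp only [Matrix.mul_sub, Matrix.sub_mul, Matrix.mul_assoc]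
  rw [h1, Matrix.mul_nonsing_inv _ hB, Matrix.nonsing_inv_mul _ hA,
    Matrix.mul_one, Matrix.one_mul]

lemma inv_antitone {A B : Mat} (hA : A.PosDef) (hB : B.PosDef)
    (hE : (B - A).PosSemidef) : (A⁻¹ - B⁻¹).PosSemidef := by
  have hAd : IsUnit A.det := (Matrix.isUnit_iff_isUnit_det _).mp hA.isUnit
  have hBd : IsUnit B.det := (Matrix.isUnit_iff_isUnit_det _).mp hB.isUnit
  set E := B - A with hEdef
  have hBinv : (B⁻¹).IsHermitian := hB.inv.isHermitian
  have hEh : E.IsHermitian := hE.isHermitian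
  -- key identity
  have key : A⁻¹ - B⁻¹ = B⁻¹ * E * B⁻¹ + (B⁻¹ * E) * A⁻¹ * (B⁻¹ * E)ᴴ := by
    have hconj : (B⁻¹ * E)ᴴ = E * B⁻¹ := by
      rw [Matrix.conjTranspose_mul, hEh.eq, hBinv.eq]
    rw [hconj]
    -- reduce to B * _ * B = B * _ * B
    have cancel : ∀ X Y : Mat, B * X * B = B * Y * B → X = Y := by
      intro X Y h
      have hBB : B * B⁻¹ = 1 := Matrix.mul_nonsing_inv _ hBd
      have hBB' : B⁻¹ * B = 1 := Matrix.nonsing_inv_mul _ hBd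
      have unconj : ∀ Z : Mat, B⁻¹ * (B * Z * B) * B⁻¹ = Z := by
        intro Z
        simp only [← Matrix.mul_assoc]
        rw [hBB', Matrix.one_mul, Matrix.mul_assoc, hBB, Matrix.mul_one]
      rw [← unconj X, ← unconj Y, h]
    apply cancel
    have hBB : B * B⁻¹ = 1 := Matrix.mul_nonsing_inv _ hBd
    have hBB' : B⁻¹ * B = 1 := Matrix.nonsing_inv_mul _ hBd
    have hAA : A⁻¹ * A = 1 := Matrix.nonsing_inv_mul _ hAd
    have hAA' : A * A⁻¹ = 1 := Matrix.mul_nonsing_inv _ hAd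
    have lhs : B * (A⁻¹ - B⁻¹) * B = B * A⁻¹ * B - B := by
      simp only [Matrix.mul_sub, Matrix.sub_mul, Matrix.mul_assoc, hBB']
      simp [Matrix.mul_assoc]
    have rhs : B * (B⁻¹ * E * B⁻¹ + B⁻¹ * E * A⁻¹ * (E * B⁻¹)) * B
        = E + E * A⁻¹ * E := by
      simp only [Matrix.mul_add, Matrix.add_mul, ← Matrix.mul_assoc]
      simp only [Matrix.mul_assoc, hBB', hBB]
      simp only [← Matrix.mul_assoc, hBB]
      simp [Matrix.mul_assoc, hBB']
    rw [lhs, rhs]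
    -- now show B * A⁻¹ * B - B = E + E * A⁻¹ * E with B = A + E
    have hBAE : B = A + E := by rw [hEdef]; abel
    rw [hBAE]
    simp only [Matrix.add_mul, Matrix.mul_add, Matrix.mul_assoc, hAA]
    simp only [← Matrix.mul_assoc, hAA']
    simp only [Matrix.mul_one, Matrix.one_mul]
    abel
  rw [key]
  refine Matrix.PosSemidef.add ?_ ?_
  · have := hE.mul_mul_conjTranspose_same B⁻¹
    rwa [hBinv.eq] at this
  · exact hA.inv.posSemidef.mul_mul_conjTranspose_same (B⁻¹ * E)

lemma core (m : ℕ) (hm : 1 ≤ m) (A B S : ℕ → Mat) (r : ℕ → ℝ)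
    (hS0 : S 0 = 0)
    (hA : ∀ k, 1 ≤ k → k ≤ m → (A k).PosDef)
    (hB : ∀ k, 1 ≤ k → k ≤ m → (B k).PosDef)
    (hS : ∀ k, k ≤ m → (S k).IsHermitian)
    (hAmono : ∀ k, 1 ≤ k → k + 1 ≤ m → (A (k+1) - A k).PosSemidef)
    (hBmono : ∀ k, 1 ≤ k → k + 1 ≤ m → (B (k+1) - B k).PosSemidef)
    (hr : ∀ k, 1 ≤ k → k + 1 ≤ m → r (k+1) ≤ r k)
    (hrm : 0 < r m) :
    r m / 2 * (S m * (A m)⁻¹ * S m * (B m)⁻¹).trace ≤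
      ∑ k ∈ Finset.Icc 1 m,
        r k * ((S k - S (k-1)) * ((A k)⁻¹ * (S k) * (B k)⁻¹)).trace := by
  induction m, hm using Nat.le_induction with
  | base =>
    rw [Finset.Icc_self, Finset.sum_singleton]
    simp only [Nat.sub_self, hS0, sub_zero]
    have hq : 0 ≤ (S 1 * (A 1)⁻¹ * S 1 * (B 1)⁻¹).trace :=
      q_nonneg (hS 1 le_rfl) (hA 1 le_rfl le_rfl).inv.posSemidef
        (hB 1 le_rfl le_rfl).inv.posSemidef
    have heq : S 1 * ((A 1)⁻¹ * S 1 * (B 1)⁻¹) = S 1 * (A 1)⁻¹ * S 1 * (B 1)⁻¹ := by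
      noncomm_ring
    rw [heq]
    nlinarith
  | succ m hm ih =>
    have hrle : r (m+1) ≤ r m := hr m hm le_rfl
    have hrm' : 0 < r m := lt_of_lt_of_le hrm hrle
    have IH := ih
      (fun k h1 h2 => hA k h1 (h2.trans (Nat.le_succ m)))
      (fun k h1 h2 => hB k h1 (h2.trans (Nat.le_succ m)))
      (fun k h2 => hS k (h2.trans (Nat.le_succ m)))
      (fun k h1 h2 => hAmono k h1 (h2.trans (Nat.le_succ m)))
      (fun k h1 h2 => hBmono k h1 (h2.trans (Nat.le_succ m)))
      (fun k h1 h2 => hr k h1 (h2.trans (Nat.le_succ m)))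
      hrm'
    rw [Finset.sum_Icc_succ_top (Nat.le_add_left 1 m)]
    set X := S (m+1)
    set Y := S m
    set P := (A (m+1))⁻¹
    set Q := (B (m+1))⁻¹
    have hAm := hA m hm (Nat.le_succ m)
    have hAm1 := hA (m+1) (Nat.le_add_left 1 m) le_rfl
    have hBm := hB m hm (Nat.le_succ m)
    have hBm1 := hB (m+1) (Nat.le_add_left 1 m) le_rfl
    have hXh : X.IsHermitian := hS (m+1) le_rfl
    have hYh : Y.IsHermitian := hS m (Nat.le_succ m)
    have hPpsd : P.PosSemidef := hAm1.inv.posSemidef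
    have hQpsd : Q.PosSemidef := hBm1.inv.posSemidef
    have hPP : ((A m)⁻¹ - P).PosSemidef :=
      inv_antitone hAm hAm1 (hAmono m hm le_rfl)
    have hQQ : ((B m)⁻¹ - Q).PosSemidef :=
      inv_antitone hBm hBm1 (hBmono m hm le_rfl)
    have hmono : (Y * P * Y * Q).trace ≤ (Y * (A m)⁻¹ * Y * (B m)⁻¹).trace :=
      q_mono hYh hPpsd hQpsd hPP hQQ
    have hc := cross_ineq hXh hYh hPpsd hQpsd
    have hq1 : 0 ≤ (X * P * X * Q).trace := q_nonneg hXh hPpsd hQpsd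
    have hqm : 0 ≤ (Y * (A m)⁻¹ * Y * (B m)⁻¹).trace :=
      q_nonneg hYh hAm.inv.posSemidef hBm.inv.posSemidef
    have hT : ((S (m+1) - S (m+1-1)) * (P * S (m+1) * Q)).trace
        = (X * P * X * Q).trace - (Y * P * X * Q).trace := by
      have : m + 1 - 1 = m := by omega
      rw [this, Matrix.sub_mul, Matrix.trace_sub]
      congr 1
      · show (X * (P * X * Q)).trace = _
        congr 1; noncomm_ring
      · show (Y * (P * X * Q)).trace = _
        congr 1; noncomm_ring
    rw [hT]
    have hswap : (Y * P * X * Q).trace = (X * P * Y * Q).trace :=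
      trace_swap hXh hYh hPpsd.isHermitian hQpsd.isHermitian
    rw [← hswap] at hc
    set a : ℝ := (X * P * X * Q).trace with ha
    set b : ℝ := (Y * P * Y * Q).trace with hb
    set c : ℝ := (Y * P * X * Q).trace with hcc
    set qm : ℝ := (Y * (A m)⁻¹ * Y * (B m)⁻¹).trace with hqmdef
    have h1 : (a - qm)/2 ≤ a - c := by linarith [hc, hmono]
    have h3 := mul_le_mul_of_nonneg_left h1 hrm.le
    have h4 := mul_le_mul_of_nonneg_right hrle hqm
    nlinarith [h3, h4, IH]

end ADBCAux

open ADBCAux in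
/-- DSC quantity of the ADBC game is strictly positive at distinct feasible
points for ordered weights `r₁ ≥ r₂ ≥ … ≥ r_K > 0`. -/
theorem adbc_dsc_pos (n K : ℕ) (hK : 0 < K)
    (N Qt Qh : ℕ → Matrix (Fin n) (Fin n) ℝ)
    (hNsymm : ∀ k ∈ Finset.Icc 1 K, (N k).IsSymm)
    (hN1 : (N 1).PosDef)
    (hdeg : ∀ k ∈ Finset.Icc 2 K, (N k - N (k - 1)).PosSemidef)
    (hQt : ∀ k ∈ Finset.Icc 1 K, (Qt k).PosSemidef)
    (hQh : ∀ k ∈ Finset.Icc 1 K, (Qh k).PosSemidef)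
    (hne : ∃ k ∈ Finset.Icc 1 K, Qt k ≠ Qh k)
    (r : ℕ → ℝ)
    (hrmono : ∀ k ∈ Finset.Icc 1 (K - 1), r (k + 1) ≤ r k)
    (hrK : 0 < r K) :
    0 < Matrix.trace (∑ k ∈ Finset.Icc 1 K,
      r k • ((Qh k - Qt k) *
        ((N k + ∑ i ∈ Finset.Icc 1 k, Qt i)⁻¹ -
         (N k + ∑ i ∈ Finset.Icc 1 k, Qh i)⁻¹))) := by
  classical
  set A : ℕ → Matrix (Fin n) (Fin n) ℝ :=
    fun k => N k + ∑ i ∈ Finset.Icc 1 k, Qt i with hAdef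
  set B : ℕ → Matrix (Fin n) (Fin n) ℝ :=
    fun k => N k + ∑ i ∈ Finset.Icc 1 k, Qh i with hBdef
  set S : ℕ → Matrix (Fin n) (Fin n) ℝ :=
    fun k => ∑ i ∈ Finset.Icc 1 k, (Qh i - Qt i) with hSdef
  have hS0 : S 0 = 0 := by simp [hSdef]
  -- basic memberships
  have hmem : ∀ k, 1 ≤ k → k ≤ K → k ∈ Finset.Icc 1 K :=
    fun k h1 h2 => Finset.mem_Icc.mpr ⟨h1, h2⟩
  -- B k = A k + S k
  have hBA : ∀ k, B k = A k + S k := by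
    intro k
    simp only [hAdef, hBdef, hSdef]
    rw [Finset.sum_sub_distrib]
    abel
  -- S is hermitian
  have hSh : ∀ k, k ≤ K → (S k).IsHermitian := by
    intro k hk
    simp only [hSdef]
    rw [Matrix.IsHermitian, Matrix.conjTranspose_sum]
    refine Finset.sum_congr rfl fun i hi => ?_
    have hiK : i ∈ Finset.Icc 1 K := by
      rw [Finset.mem_Icc] at hi ⊢; omega
    exact ((hQh i hiK).isHermitian).sub ((hQt i hiK).isHermitian)
  -- increments of A and B
  have hAstep : ∀ k, 1 ≤ k → A (k+1) = A k + ((N (k+1) - N k) + Qt (k+1)) := by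
    intro k hk
    simp only [hAdef]
    rw [Finset.sum_Icc_succ_top (Nat.le_add_left 1 k)]
    abel
  have hBstep : ∀ k, 1 ≤ k → B (k+1) = B k + ((N (k+1) - N k) + Qh (k+1)) := by
    intro k hk
    simp only [hBdef]
    rw [Finset.sum_Icc_succ_top (Nat.le_add_left 1 k)]
    abel
  have hdeg' : ∀ k, 1 ≤ k → k + 1 ≤ K → (N (k+1) - N k).PosSemidef := by
    intro k h1 h2
    have := hdeg (k+1) (Finset.mem_Icc.mpr ⟨by omega, h2⟩)
    simpa using this
  have hAmono : ∀ k, 1 ≤ k → k + 1 ≤ K → (A (k+1) - A k).PosSemidef := by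
    intro k h1 h2
    rw [hAstep k h1, add_sub_cancel_left]
    exact (hdeg' k h1 h2).add (hQt (k+1) (hmem _ (by omega) h2))
  have hBmono : ∀ k, 1 ≤ k → k + 1 ≤ K → (B (k+1) - B k).PosSemidef := by
    intro k h1 h2
    rw [hBstep k h1, add_sub_cancel_left]
    exact (hdeg' k h1 h2).add (hQh (k+1) (hmem _ (by omega) h2))
  -- A, B positive definite
  have hApos : ∀ k, 1 ≤ k → k ≤ K → (A k).PosDef := by
    intro k hk
    induction k, hk using Nat.le_induction with
    | base =>
      intro h1
      have : A 1 = N 1 + Qt 1 := by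
        simp [hAdef]
      rw [this]
      exact hN1.add_posSemidef (hQt 1 (hmem 1 le_rfl hK))
    | succ k hk ih =>
      intro h2
      rw [hAstep k hk]
      exact (ih (by omega)).add_posSemidef
        ((hdeg' k hk h2).add (hQt (k+1) (hmem _ (by omega) h2)))
  have hBpos : ∀ k, 1 ≤ k → k ≤ K → (B k).PosDef := by
    intro k hk
    induction k, hk using Nat.le_induction with
    | base =>
      intro h1
      have : B 1 = N 1 + Qh 1 := by
        simp [hBdef]
      rw [this]
      exact hN1.add_posSemidef (hQh 1 (hmem 1 le_rfl hK))
    | succ k hk ih =>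
      intro h2
      rw [hBstep k hk]
      exact (ih (by omega)).add_posSemidef
        ((hdeg' k hk h2).add (hQh (k+1) (hmem _ (by omega) h2)))
  -- r is positive on [1, K]
  have hrpos : ∀ k, 1 ≤ k → k ≤ K → 0 < r k := by
    have mono2 : ∀ a, 1 ≤ a → ∀ b, a ≤ b → b ≤ K → r b ≤ r a := by
      intro a ha b hab
      induction b, hab using Nat.le_induction with
      | base => intro _; exact le_rfl
      | succ b hb ihb =>
        intro hbK
        have h1 : r (b+1) ≤ r b :=
          hrmono b (Finset.mem_Icc.mpr ⟨by omega, by omega⟩)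
        exact h1.trans (ihb (by omega))
    intro k h1 h2
    exact lt_of_lt_of_le hrK (mono2 k h1 K h2 le_rfl)
  -- D k = S k - S (k-1) on [1, K]
  have hD : ∀ k, 1 ≤ k → Qh k - Qt k = S k - S (k-1) := by
    intro k hk
    have hk1 : k - 1 + 1 = k := by omega
    have : S k = S (k-1) + (Qh k - Qt k) := by
      conv_lhs => rw [← hk1]
      simp only [hSdef]
      rw [Finset.sum_Icc_succ_top (Nat.le_add_left 1 (k-1)), hk1]
    rw [this]; abel
  -- rewrite the goal sum
  have hsum : Matrix.trace (∑ k ∈ Finset.Icc 1 K,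
      r k • ((Qh k - Qt k) * ((A k)⁻¹ - (B k)⁻¹)))
      = ∑ k ∈ Finset.Icc 1 K,
          r k * ((S k - S (k-1)) * ((A k)⁻¹ * S k * (B k)⁻¹)).trace := by
    rw [Matrix.trace_sum]
    refine Finset.sum_congr rfl fun k hk => ?_
    rw [Finset.mem_Icc] at hk
    have hAk := hApos k hk.1 hk.2
    have hBk := hBpos k hk.1 hk.2
    have hinv : (A k)⁻¹ - (B k)⁻¹ = (A k)⁻¹ * S k * (B k)⁻¹ := by
      have h := inv_sub_inv_eq
        ((Matrix.isUnit_iff_isUnit_det _).mp hAk.isUnit)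
        ((Matrix.isUnit_iff_isUnit_det _).mp hBk.isUnit)
      rw [h]
      congr 1
      rw [hBA k]
      congr 1
      abel
    rw [Matrix.trace_smul, smul_eq_mul, hinv, hD k hk.1]
  rw [hsum]
  -- choose the largest index with S k ≠ 0
  set F := (Finset.Icc 1 K).filter (fun k => S k ≠ 0) with hFdef
  have hFne : F.Nonempty := by
    by_contra hemp
    rw [Finset.not_nonempty_iff_eq_empty, Finset.filter_eq_empty_iff] at hemp
    obtain ⟨k, hk, hkne⟩ := hne
    apply hkne
    have hk' := Finset.mem_Icc.mp hk
    have hSk : S k = 0 := not_not.mp (hemp hk)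
    have hSk1 : S (k-1) = 0 := by
      rcases Nat.eq_zero_or_pos (k-1) with h | h
      · rw [h]; exact hS0
      · exact not_not.mp (hemp (Finset.mem_Icc.mpr ⟨by omega, by omega⟩))
    have hDk := hD k hk'.1
    rw [hSk, hSk1, sub_zero] at hDk
    exact (sub_eq_zero.mp hDk).symm
  set M := F.max' hFne with hMdef
  have hMF : M ∈ F := F.max'_mem hFne
  rw [hFdef, Finset.mem_filter, Finset.mem_Icc] at hMF
  obtain ⟨⟨hM1, hMK⟩, hMS⟩ := hMF
  have hMmax : ∀ k, M < k → k ≤ K → S k = 0 := by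
    intro k h1 h2
    by_contra h
    have hkF : k ∈ F := by
      rw [hFdef, Finset.mem_filter, Finset.mem_Icc]
      exact ⟨⟨by omega, h2⟩, h⟩
    have := F.le_max' k hkF
    omega
  -- split the sum at M
  have hIccIoc : ∀ x : ℕ, Finset.Icc 1 x = Finset.Ioc 0 x := by
    intro x; ext y; simp; omega
  have hsplit := Finset.sum_Ioc_consecutive
    (fun k => r k * ((S k - S (k-1)) * ((A k)⁻¹ * S k * (B k)⁻¹)).trace)
    (Nat.zero_le M) hMK
  rw [hIccIoc K, ← hsplit]
  have hzero : ∑ k ∈ Finset.Ioc M K,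
      r k * ((S k - S (k-1)) * ((A k)⁻¹ * S k * (B k)⁻¹)).trace = 0 := by
    refine Finset.sum_eq_zero fun k hk => ?_
    rw [Finset.mem_Ioc] at hk
    have hSk : S k = 0 := hMmax k hk.1 hk.2
    simp [hSk]
  rw [hzero, add_zero, ← hIccIoc M]
  have hcore := core M hM1 A B S r hS0
    (fun k h1 h2 => hApos k h1 (h2.trans hMK))
    (fun k h1 h2 => hBpos k h1 (h2.trans hMK))
    (fun k h2 => hSh k (h2.trans hMK))
    (fun k h1 h2 => hAmono k h1 (h2.trans hMK))
    (fun k h1 h2 => hBmono k h1 (h2.trans hMK))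
    (fun k h1 h2 => hrmono k (Finset.mem_Icc.mpr ⟨h1, by omega⟩))
    (hrpos M hM1 hMK)
  refine lt_of_lt_of_le ?_ hcore
  have hq : 0 < (S M * (A M)⁻¹ * S M * (B M)⁻¹).trace :=
    q_pos (hSh M hMK) hMS (hApos M hM1 hMK).inv (hBpos M hM1 hMK).inv
  have := hrpos M hM1 hMK
  positivity
end

section
/- Let K be a positive integer, let S be an n×n real positive semidefinite matrix, and let Q̃_1, ..., Q̃_K, Q̂_1, ..., Q̂_K, L̃_1, ..., L̃_K, L̂_1, ..., L̂_K, D̃, D̂ be n×n real positive semidefinite matrices satisfying: S − ∑_{i=1}^{K} Q̃_i and S − ∑_{i=1}^{K} Q̂_i are positive semidefinite; Tr(L̃_i Q̃_i) = 0 and Tr(L̂_i Q̂_i) = 0 for every i; Tr(D̃ (∑_{i=1}^{K} Q̃_i − S)) = 0; and Tr(D̂ (∑_{i=1}^{K} Q̂_i − S)) = 0. Then ∑_{i=1}^{K} Tr[ (Q̂_i − Q̃_i)(L̃_i − D̃) + (Q̃_i − Q̂_i)(L̂_i − D̂) ] ≥ 0. -/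
open Finset Matrix

lemma psd_trace_nonneg_s8 {m : ℕ} {A : Matrix (Fin m) (Fin m) ℝ} (hA : A.PosSemidef) :
    0 ≤ A.trace := by
  rw [Matrix.trace]
  apply Finset.sum_nonneg
  intro i _
  have := hA.dotProduct_mulVec_nonneg (Pi.single i 1)
  simpa [dotProduct, Matrix.mulVec, Pi.single_apply] using this

open scoped MatrixOrder in
lemma psd_trace_mul_nonneg {m : ℕ} {A B : Matrix (Fin m) (Fin m) ℝ}
    (hA : A.PosSemidef) (hB : B.PosSemidef) : 0 ≤ (A * B).trace := by
  obtain ⟨X, hX, -, h1⟩ :=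
    CFC.exists_sqrt_of_isSelfAdjoint_of_quasispectrumRestricts hA.isHermitian
      (QuasispectrumRestricts.nnreal_of_nonneg hA.nonneg)
  rw [← h1, Matrix.mul_assoc, Matrix.trace_mul_comm]
  have hherm : X.conjTranspose = X := hX.star_eq
  have := hB.mul_mul_conjTranspose_same X
  rw [hherm] at this
  exact psd_trace_nonneg_s8 this

/-- The KKT multiplier term `β` is nonnegative: given two KKT points of the
broadcast channel game with joint covariance constraint `∑ᵢ Qᵢ ⪯ S`,
`∑ᵢ Tr[(Q̂ᵢ − Q̃ᵢ)(L̃ᵢ − D̃) + (Q̃ᵢ − Q̂ᵢ)(L̂ᵢ − D̂)] ≥ 0`. -/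
theorem kkt_beta_nonneg (n K : ℕ) (hK : 0 < K)
    (S : Matrix (Fin n) (Fin n) ℝ) (hS : S.PosSemidef)
    (Qt Qh Lt Lh : ℕ → Matrix (Fin n) (Fin n) ℝ)
    (Dt Dh : Matrix (Fin n) (Fin n) ℝ)
    (hQt : ∀ i ∈ Finset.Icc 1 K, (Qt i).PosSemidef)
    (hQh : ∀ i ∈ Finset.Icc 1 K, (Qh i).PosSemidef)
    (hLt : ∀ i ∈ Finset.Icc 1 K, (Lt i).PosSemidef)
    (hLh : ∀ i ∈ Finset.Icc 1 K, (Lh i).PosSemidef)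
    (hDt : Dt.PosSemidef) (hDh : Dh.PosSemidef)
    (hfeast : (S - ∑ i ∈ Finset.Icc 1 K, Qt i).PosSemidef)
    (hfeash : (S - ∑ i ∈ Finset.Icc 1 K, Qh i).PosSemidef)
    (hcst : ∀ i ∈ Finset.Icc 1 K, Matrix.trace (Lt i * Qt i) = 0)
    (hcsh : ∀ i ∈ Finset.Icc 1 K, Matrix.trace (Lh i * Qh i) = 0)
    (hcsDt : Matrix.trace (Dt * ((∑ i ∈ Finset.Icc 1 K, Qt i) - S)) = 0)
    (hcsDh : Matrix.trace (Dh * ((∑ i ∈ Finset.Icc 1 K, Qh i) - S)) = 0) :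
    0 ≤ ∑ i ∈ Finset.Icc 1 K,
      Matrix.trace ((Qh i - Qt i) * (Lt i - Dt) + (Qt i - Qh i) * (Lh i - Dh)) := by
  have hterm : ∀ i ∈ Finset.Icc 1 K,
      Matrix.trace ((Qh i - Qt i) * (Lt i - Dt) + (Qt i - Qh i) * (Lh i - Dh)) =
      Matrix.trace (Qh i * Lt i) + Matrix.trace (Qt i * Lh i) +
        (Matrix.trace (Dt * Qt i) - Matrix.trace (Dt * Qh i)) +
        (Matrix.trace (Dh * Qh i) - Matrix.trace (Dh * Qt i)) := by
    intro i hi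
    have h1 := hcst i hi
    have h2 := hcsh i hi
    rw [Matrix.trace_mul_comm] at h1 h2
    simp only [sub_mul, mul_sub, Matrix.trace_add, Matrix.trace_sub, h1, h2,
      Matrix.trace_mul_comm (Qt i) Dt, Matrix.trace_mul_comm (Qh i) Dt,
      Matrix.trace_mul_comm (Qt i) Dh, Matrix.trace_mul_comm (Qh i) Dh]
    ring
  rw [Finset.sum_congr rfl hterm]
  have hsplit : ∑ i ∈ Finset.Icc 1 K,
      (Matrix.trace (Qh i * Lt i) + Matrix.trace (Qt i * Lh i) +
        (Matrix.trace (Dt * Qt i) - Matrix.trace (Dt * Qh i)) +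
        (Matrix.trace (Dh * Qh i) - Matrix.trace (Dh * Qt i))) =
      (∑ i ∈ Finset.Icc 1 K, Matrix.trace (Qh i * Lt i)) +
      (∑ i ∈ Finset.Icc 1 K, Matrix.trace (Qt i * Lh i)) +
      Matrix.trace (Dt * (S - ∑ i ∈ Finset.Icc 1 K, Qh i)) +
      Matrix.trace (Dh * (S - ∑ i ∈ Finset.Icc 1 K, Qt i)) := by
    have e1 : Matrix.trace (Dt * ∑ i ∈ Finset.Icc 1 K, Qt i) = Matrix.trace (Dt * S) := by
      rw [Matrix.mul_sub, Matrix.trace_sub] at hcsDt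
      linarith
    have e2 : Matrix.trace (Dh * ∑ i ∈ Finset.Icc 1 K, Qh i) = Matrix.trace (Dh * S) := by
      rw [Matrix.mul_sub, Matrix.trace_sub] at hcsDh
      linarith
    simp only [Finset.sum_add_distrib, Finset.sum_sub_distrib, Matrix.mul_sub,
      Matrix.trace_sub, ← Matrix.trace_sum, ← Finset.mul_sum, e1, e2]
  rw [hsplit]
  have t1 : 0 ≤ ∑ i ∈ Finset.Icc 1 K, Matrix.trace (Qh i * Lt i) :=
    Finset.sum_nonneg fun i hi => psd_trace_mul_nonneg (hQh i hi) (hLt i hi)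
  have t2 : 0 ≤ ∑ i ∈ Finset.Icc 1 K, Matrix.trace (Qt i * Lh i) :=
    Finset.sum_nonneg fun i hi => psd_trace_mul_nonneg (hQt i hi) (hLh i hi)
  have t3 : 0 ≤ Matrix.trace (Dt * (S - ∑ i ∈ Finset.Icc 1 K, Qh i)) :=
    psd_trace_mul_nonneg hDt hfeash
  have t4 : 0 ≤ Matrix.trace (Dh * (S - ∑ i ∈ Finset.Icc 1 K, Qt i)) :=
    psd_trace_mul_nonneg hDh hfeast
  linarith
end
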